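/- arXiv:2009.02338 — 6 statements merged into one kernel-verified Lean document; each statement's English description precedes it below -/
import Mathlib

section
/- Let ϑ : E → ℂ be a bounded Borel function with |ϑ| ≤ 1 on E and ϑ(a) = 1, such that ∫_E ϑ dp_{t,x} = (∫_E ϑ dp_{t,a})·ϑ(x) for all t ≥ 0 and x ∈ E, and such that t ↦ ∫_E ϑ dp_{t,a} is continuous on [0,∞). Then ϑ is continuous on E, and there exists λ ∈ ℂ with Re λ ≥ 0 such that ∫_E ϑ dp_{t,x} = e^{−λt}·ϑ(x) for all t ≥ 0 and x ∈ E. -/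
open MeasureTheory

set_option maxHeartbeats 1000000 in
theorem stmt_2 {E : Type*} [MetricSpace E] [MeasurableSpace E] [BorelSpace E]
    (a : E) (p : ℝ → E → Measure E) (hprob : ∀ t x, IsProbabilityMeasure (p t x))
    (h0 : ∀ x, p 0 x = Measure.dirac x)
    (hCK : ∀ s t : ℝ, 0 ≤ s → 0 ≤ t → ∀ x : E, ∀ f : E → ℂ,
      Measurable f → (∃ C : ℝ, ∀ z, ‖f z‖ ≤ C) →
      ∫ y, (∫ ξ, f ξ ∂(p t y)) ∂(p s x) = ∫ ξ, f ξ ∂(p (t + s) x))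
    (hSF : ∀ t : ℝ, 0 < t → ∀ f : E → ℂ, Measurable f → (∃ C : ℝ, ∀ z, ‖f z‖ ≤ C) →
      Continuous (fun x => ∫ ξ, f ξ ∂(p t x)) ∧ ∃ C : ℝ, ∀ x, ‖∫ ξ, f ξ ∂(p t x)‖ ≤ C)
    (ϑ : E → ℂ) (hmeas : Measurable ϑ) (hbd : ∀ x, ‖ϑ x‖ ≤ 1) (ha : ϑ a = 1)
    (heig : ∀ t : ℝ, 0 ≤ t → ∀ x, ∫ ξ, ϑ ξ ∂(p t x) = (∫ ξ, ϑ ξ ∂(p t a)) * ϑ x)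
    (hcont : ContinuousOn (fun t => ∫ ξ, ϑ ξ ∂(p t a)) (Set.Ici (0 : ℝ))) :
    Continuous ϑ ∧ ∃ l : ℂ, 0 ≤ l.re ∧ ∀ t : ℝ, 0 ≤ t → ∀ x,
      ∫ ξ, ϑ ξ ∂(p t x) = Complex.exp (-l * t) * ϑ x := by
  set φ : ℝ → ℂ := fun t => ∫ ξ, ϑ ξ ∂(p t a) with hφdef
  have hφ0 : φ 0 = 1 := by
    simp only [hφdef, h0 a]
    rw [integral_dirac]
    exact ha
  -- integrability of ϑ against any p t x
  have hint : ∀ t x, Integrable ϑ (p t x) := by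
    intro t x
    have := hprob t x
    exact (integrable_const (1 : ℝ)).mono' hmeas.aestronglyMeasurable
      (Filter.Eventually.of_forall hbd)
  -- uniform bound
  have hφbd : ∀ t x, ‖∫ ξ, ϑ ξ ∂(p t x)‖ ≤ 1 := by
    intro t x
    have := hprob t x
    calc ‖∫ ξ, ϑ ξ ∂(p t x)‖ ≤ 1 * ((p t x) Set.univ).toReal :=
          norm_integral_le_of_norm_le_const (Filter.Eventually.of_forall hbd)
      _ = 1 := by simp
  -- semigroup property of φ
  have hmul : ∀ s t : ℝ, 0 ≤ s → 0 ≤ t → φ (s + t) = φ s * φ t := by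
    intro s t hs ht
    have h1 := hCK s t hs ht a ϑ hmeas ⟨1, hbd⟩
    have h2 : ∀ y, ∫ ξ, ϑ ξ ∂(p t y) = φ t * ϑ y := fun y => heig t ht y
    calc φ (s + t) = ∫ ξ, ϑ ξ ∂(p (t + s) a) := by rw [hφdef]; ring_nf
      _ = ∫ y, (∫ ξ, ϑ ξ ∂(p t y)) ∂(p s a) := h1.symm
      _ = ∫ y, φ t * ϑ y ∂(p s a) := by simp_rw [h2]
      _ = φ t * φ s := integral_const_mul _ _
      _ = φ s * φ t := mul_comm _ _
  -- a small h > 0 such that ‖φ s - 1‖ ≤ 1/2 on [0, h]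
  obtain ⟨h, hh0, hhsmall⟩ : ∃ h : ℝ, 0 < h ∧ ∀ s ∈ Set.Icc (0:ℝ) h, ‖φ s - 1‖ ≤ 1 / 2 := by
    have hc0 : ContinuousWithinAt φ (Set.Ici 0) 0 := hcont 0 Set.self_mem_Ici
    have htd := hc0.tendsto
    rw [hφ0] at htd
    have hball : ∀ᶠ z in nhds (1 : ℂ), ‖z - 1‖ ≤ 1 / 2 := by
      have h2 : Metric.closedBall (1:ℂ) (1/2) ∈ nhds (1:ℂ) :=
        Metric.closedBall_mem_nhds _ (by norm_num)
      filter_upwards [h2] with z hz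
      simpa [Metric.mem_closedBall, dist_eq_norm] using hz
    have hev : ∀ᶠ s in nhdsWithin 0 (Set.Ici (0:ℝ)), ‖φ s - 1‖ ≤ 1 / 2 :=
      htd.eventually hball
    obtain ⟨ε, hε, hsub⟩ := Metric.mem_nhdsWithin_iff.mp hev
    refine ⟨ε / 2, by positivity, fun s hs => ?_⟩
    refine hsub ⟨?_, hs.1⟩
    rw [Metric.mem_ball, Real.dist_eq, sub_zero, abs_of_nonneg hs.1]
    linarith [hs.2]
  -- φ is continuous on [0,∞) and interval integrable
  have hφcont : ContinuousOn φ (Set.Ici 0) := hcont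
  have hφII : ∀ b : ℝ, 0 ≤ b → IntervalIntegrable φ volume 0 b := by
    intro b hb
    apply ContinuousOn.intervalIntegrable
    apply hφcont.mono
    rw [Set.uIcc_of_le hb]
    exact fun z hz => hz.1
  set c : ℂ := ∫ s in (0:ℝ)..h, φ s with hcdef
  have hcne : c ≠ 0 := by
    have hsub : c - h = ∫ s in (0:ℝ)..h, (φ s - 1) := by
      rw [intervalIntegral.integral_sub (hφII h hh0.le) intervalIntegrable_const]
      simp [hcdef]
    have hb : ‖c - (h:ℂ)‖ ≤ (1/2) * h := by
      rw [hsub]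
      have := intervalIntegral.norm_integral_le_of_norm_le_const
        (C := 1/2) (f := fun s => φ s - 1) (a := (0:ℝ)) (b := h) ?_
      · simpa [abs_of_nonneg hh0.le] using this
      · intro s hs
        rw [Set.uIoc_of_le hh0.le] at hs
        exact hhsmall s ⟨hs.1.le, hs.2⟩
    intro hc
    rw [hc, zero_sub, norm_neg] at hb
    simp only [Complex.norm_real, Real.norm_eq_abs, abs_of_nonneg hh0.le] at hb
    linarith
  -- key identity: ∫ s in t..t+h, φ s = c * φ t for t ≥ 0
  have hkey : ∀ t : ℝ, 0 ≤ t →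
      (∫ s in (0:ℝ)..(t+h), φ s) - (∫ s in (0:ℝ)..t, φ s) = c * φ t := by
    intro t ht
    have hII1 : IntervalIntegrable φ volume 0 (t + h) := hφII _ (by linarith)
    have hII2 : IntervalIntegrable φ volume 0 t := hφII _ ht
    rw [intervalIntegral.integral_interval_sub_left hII1 hII2]
    have h1 : (∫ s in t..(t+h), φ s) = ∫ s in (0:ℝ)..h, φ (s + t) := by
      rw [intervalIntegral.integral_comp_add_right (fun s => φ s) t]
      norm_num [add_comm]
    rw [h1]
    have h2 : (∫ s in (0:ℝ)..h, φ (s + t)) = ∫ s in (0:ℝ)..h, φ s * φ t := by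
      apply intervalIntegral.integral_congr
      intro s hs
      rw [Set.uIcc_of_le hh0.le] at hs
      exact hmul s t hs.1 ht
    rw [h2, intervalIntegral.integral_mul_const]
  -- right derivative of φ on [0,∞)
  set μ : ℂ := c⁻¹ * (φ h - 1) with hμdef
  set F : ℝ → ℂ := fun u => ∫ s in (0:ℝ)..u, φ s with hFdef
  have hFderiv : ∀ b : ℝ, 0 ≤ b → HasDerivWithinAt F (φ b) (Set.Ici b) b := by
    intro b hb
    apply intervalIntegral.integral_hasDerivWithinAt_right (hφII b hb)
      (s := Set.Ici b) (t := Set.Ioi b)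
    · refine ⟨Set.Ici 0, ?_, hφcont.aestronglyMeasurable measurableSet_Ici⟩
      exact Filter.mem_of_superset self_mem_nhdsWithin
        (fun z hz => le_of_lt (lt_of_le_of_lt hb hz))
    · exact (hφcont b hb).mono (fun z hz => le_of_lt (lt_of_le_of_lt hb hz))
  have hφderiv : ∀ x : ℝ, 0 ≤ x → HasDerivWithinAt φ (μ * φ x) (Set.Ici x) x := by
    intro x hx
    have h1 : HasDerivWithinAt F (φ x) (Set.Ici x) x := hFderiv x hx
    have h2 : HasDerivWithinAt (fun t => F (t + h)) (φ (x + h)) (Set.Ici x) x := by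
      have hg : HasDerivWithinAt (fun t : ℝ => t + h) 1 (Set.Ici x) x :=
        ((hasDerivAt_id x).add_const h).hasDerivWithinAt
      have hmaps : Set.MapsTo (fun t : ℝ => t + h) (Set.Ici x) (Set.Ici (x + h)) :=
        fun z hz => by simp only [Set.mem_Ici] at *; linarith
      have hxh : (0:ℝ) ≤ x + h := by linarith
      have hcomp : HasDerivWithinAt (F ∘ fun t : ℝ => t + h) ((1:ℝ) • φ (x + h))
          (Set.Ici x) x :=
        HasDerivWithinAt.scomp (x := x) (hFderiv (x + h) hxh) hg hmaps
      rw [one_smul] at hcomp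
      exact hcomp
    have h3 : HasDerivWithinAt (fun t => c⁻¹ * (F (t + h) - F t))
        (c⁻¹ * (φ (x + h) - φ x)) (Set.Ici x) x := (h2.sub h1).const_mul _
    have heqset : ∀ y ∈ Set.Ici x, φ y = c⁻¹ * (F (y + h) - F y) := by
      intro y hy
      have hy0 : (0:ℝ) ≤ y := le_trans hx hy
      rw [hkey y hy0, ← mul_assoc, inv_mul_cancel₀ hcne, one_mul]
    have h4 : HasDerivWithinAt φ (c⁻¹ * (φ (x + h) - φ x)) (Set.Ici x) x :=
      h3.congr heqset (heqset x (Set.self_mem_Ici))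
    have : c⁻¹ * (φ (x + h) - φ x) = μ * φ x := by
      rw [hmul x h hx hh0.le, hμdef]; ring
    rwa [this] at h4
  -- the exponential formula for φ
  have hφexp : ∀ t : ℝ, 0 ≤ t → φ t = Complex.exp (μ * t) := by
    intro T hT
    set g : ℝ → ℂ := fun t => Complex.exp (-μ * t) * φ t with hgdef
    have hgderiv : ∀ x ∈ Set.Ico 0 T, HasDerivWithinAt g 0 (Set.Ici x) x := by
      intro x hx
      have hexp : HasDerivAt (fun t : ℝ => Complex.exp (-μ * t))
          (Complex.exp (-μ * x) * -μ) x := by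
        have h1 : HasDerivAt (fun t : ℝ => -μ * (t : ℂ)) (-μ) x := by
          simpa using (Complex.ofRealCLM.hasDerivAt (x := x)).const_mul (-μ)
        simpa using h1.cexp
      have := hexp.hasDerivWithinAt.mul (hφderiv x hx.1)
      have h0' : Complex.exp (-μ * ↑x) * -μ * φ x + Complex.exp (-μ * ↑x) * (μ * φ x) = 0 := by
        ring
      rw [h0'] at this
      exact this
    have hgcont : ContinuousOn g (Set.Icc 0 T) := by
      apply ContinuousOn.mul
      · exact (Complex.continuous_exp.comp
          (continuous_const.mul Complex.continuous_ofReal)).continuousOn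
      · exact hφcont.mono (fun z hz => hz.1)
    have hconst := constant_of_has_deriv_right_zero hgcont hgderiv T
      (Set.right_mem_Icc.mpr hT)
    have hg0 : g 0 = 1 := by simp [hgdef, hφ0]
    have hgT : Complex.exp (-μ * T) * φ T = 1 := by
      rw [← hg0]; exact hconst
    calc φ T = Complex.exp (μ * ↑T) * (Complex.exp (-μ * ↑T) * φ T) := by
          rw [← mul_assoc, ← Complex.exp_add]
          have : μ * ↑T + -μ * ↑T = 0 := by ring
          rw [this, Complex.exp_zero, one_mul]
      _ = Complex.exp (μ * ↑T) * 1 := by rw [hgT]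
      _ = Complex.exp (μ * ↑T) := mul_one _
  refine ⟨?_, -μ, ?_, ?_⟩
  · -- continuity of ϑ
    have hφ1 : φ 1 ≠ 0 := by rw [hφexp 1 zero_le_one]; exact Complex.exp_ne_zero _
    have hrep : ϑ = fun x => (φ 1)⁻¹ * ∫ ξ, ϑ ξ ∂(p 1 x) := by
      funext x
      rw [heig 1 zero_le_one x, ← mul_assoc, inv_mul_cancel₀ hφ1, one_mul]
    rw [hrep]
    exact continuous_const.mul (hSF 1 one_pos ϑ hmeas ⟨1, hbd⟩).1
  · -- Re(-μ) ≥ 0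
    have h1 : ‖φ 1‖ ≤ 1 := hφbd 1 a
    rw [hφexp 1 zero_le_one] at h1
    simp only [Complex.ofReal_one, mul_one, Complex.norm_exp] at h1
    rw [Real.exp_le_one_iff] at h1
    simpa using h1
  · intro t ht x
    rw [heig t ht x]
    have hrw : (∫ ξ, ϑ ξ ∂(p t a)) = φ t := rfl
    rw [hrw, hφexp t ht, neg_neg]
end

section
/- For all Borel probability measures μ, ν on E there exists a unique Borel probability measure μ⋄ν on E such that ∫_E f d(μ⋄ν) = ∫_E ∫_E (∫_E f dν_{x,y}) μ(dx) ν(dy) for every continuous f : E → ℝ. The operation ⋄ is commutative and associative on the set of Borel probability measures on E, satisfies δ_a ⋄ μ = μ for every μ, is jointly continuous for the topology of weak convergence, and trivializes under the family (φ_j): ∫_E φ_j d(μ⋄ν) = (∫_E φ_j dμ)·(∫_E φ_j dν) for every j ∈ ℕ. -/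
open MeasureTheory

set_option linter.unusedSectionVars false
set_option linter.unusedVariables false
set_option maxHeartbeats 1000000

open MeasureTheory Topology BoundedContinuousFunction Set Filter
open scoped NNReal ENNReal

section RMK

variable {E : Type*} [MetricSpace E] [CompactSpace E]

/-- A positive normalized linear functional on bounded continuous functions. -/
structure PLF (E : Type*) [MetricSpace E] [CompactSpace E] where
  L : (E →ᵇ ℝ) → ℝ
  add' : ∀ f g, L (f + g) = L f + L g
  smul' : ∀ (c : ℝ) (f), L (c • f) = c * L f
  pos' : ∀ f, 0 ≤ f → 0 ≤ L f
  one' : L 1 = 1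

namespace PLF

variable (Λ : PLF E)

lemma zero' : Λ.L 0 = 0 := by
  have := Λ.add' 0 0
  simp only [add_zero] at this
  linarith

lemma mono' {f g : E →ᵇ ℝ} (h : f ≤ g) : Λ.L f ≤ Λ.L g := by
  have h1 : 0 ≤ Λ.L (g - f) := Λ.pos' _ (by simpa [sub_nonneg] using h)
  have h2 : Λ.L (f + (g - f)) = Λ.L f + Λ.L (g - f) := Λ.add' _ _
  simp only [add_sub_cancel] at h2
  linarith

lemma const' (c : ℝ) : Λ.L (const E c) = c := by
  have : const E c = c • (1 : E →ᵇ ℝ) := by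
    ext x; simp
  rw [this, Λ.smul', Λ.one', mul_one]

lemma sum' {ι : Type*} (s : Finset ι) (h : ι → (E →ᵇ ℝ)) :
    Λ.L (∑ i ∈ s, h i) = ∑ i ∈ s, Λ.L (h i) := by
  classical
  induction s using Finset.induction_on with
  | empty => simpa using Λ.zero'
  | insert a s hx ih => rw [Finset.sum_insert hx, Λ.add', ih, Finset.sum_insert hx]

/-- The admissible (competitor) functions for a set `K`. -/
def Adm (K : Set E) : Set (E →ᵇ ℝ) := {f | 0 ≤ f ∧ ∀ x ∈ K, 1 ≤ f x}

/-- The Riesz content of a set. -/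
noncomputable def rc (K : Set E) : ℝ := sInf (Λ.L '' Adm K)

lemma nonneg_iff {f : E →ᵇ ℝ} : 0 ≤ f ↔ ∀ x, 0 ≤ f x :=
  ⟨fun h x => by simpa using h x, fun h x => by simpa using h x⟩

lemma le_iff {f g : E →ᵇ ℝ} : f ≤ g ↔ ∀ x, f x ≤ g x :=
  ⟨fun h x => by simpa using h x, fun h x => by simpa using h x⟩

lemma one_mem_adm (K : Set E) : (1 : E →ᵇ ℝ) ∈ Adm (E := E) K :=
  ⟨nonneg_iff.mpr fun x => by simp, fun x _ => by simp⟩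

lemma adm_nonempty (K : Set E) : (Λ.L '' Adm K).Nonempty := ⟨_, _, one_mem_adm K, rfl⟩

lemma adm_bddBelow (K : Set E) : BddBelow (Λ.L '' Adm K) := by
  refine ⟨0, ?_⟩
  rintro r ⟨f, hf, rfl⟩
  exact Λ.pos' f hf.1

lemma rc_le {K : Set E} {f : E →ᵇ ℝ} (hf : f ∈ Adm (E := E) K) : Λ.rc K ≤ Λ.L f :=
  csInf_le (Λ.adm_bddBelow K) ⟨f, hf, rfl⟩

lemma le_rc {K : Set E} {c : ℝ} (h : ∀ f ∈ Adm (E := E) K, c ≤ Λ.L f) : c ≤ Λ.rc K := by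
  refine le_csInf (Λ.adm_nonempty K) ?_
  rintro r ⟨f, hf, rfl⟩
  exact h f hf

lemma rc_nonneg (K : Set E) : 0 ≤ Λ.rc K :=
  Λ.le_rc fun f hf => Λ.pos' f hf.1

lemma rc_mono {K₁ K₂ : Set E} (h : K₁ ⊆ K₂) : Λ.rc K₁ ≤ Λ.rc K₂ := by
  apply csInf_le_csInf (Λ.adm_bddBelow K₁) (Λ.adm_nonempty K₂)
  apply image_mono
  rintro f ⟨h0, h1⟩
  exact ⟨h0, fun x hx => h1 x (h hx)⟩

lemma rc_univ : Λ.rc (univ : Set E) = 1 := by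
  refine le_antisymm ?_ ?_
  · simpa [Λ.one'] using Λ.rc_le (one_mem_adm univ)
  · refine Λ.le_rc fun f hf => ?_
    have : (1 : E →ᵇ ℝ) ≤ f := le_iff.mpr fun x => by simpa using hf.2 x (mem_univ x)
    simpa [Λ.one'] using Λ.mono' this

lemma rc_union_le (K₁ K₂ : Set E) : Λ.rc (K₁ ∪ K₂) ≤ Λ.rc K₁ + Λ.rc K₂ := by
  refine le_of_forall_pos_le_add fun ε hε => ?_
  obtain ⟨r₁, ⟨f₁, hf₁, rfl⟩, h₁⟩ := Real.lt_sInf_add_pos (Λ.adm_nonempty K₁) (half_pos hε)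
  obtain ⟨r₂, ⟨f₂, hf₂, rfl⟩, h₂⟩ := Real.lt_sInf_add_pos (Λ.adm_nonempty K₂) (half_pos hε)
  have hadm : f₁ + f₂ ∈ Adm (E := E) (K₁ ∪ K₂) := by
    constructor
    · exact add_nonneg hf₁.1 hf₂.1
    · intro x hx
      have e : (f₁ + f₂) x = f₁ x + f₂ x := rfl
      rcases hx with hx | hx
      · have h2 := nonneg_iff.mp hf₂.1 x; have h1 := hf₁.2 x hx
        rw [e]; linarith
      · have h2 := nonneg_iff.mp hf₁.1 x; have h1 := hf₂.2 x hx
        rw [e]; linarith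
  calc Λ.rc (K₁ ∪ K₂) ≤ Λ.L (f₁ + f₂) := Λ.rc_le hadm
  _ = Λ.L f₁ + Λ.L f₂ := Λ.add' _ _
  _ ≤ Λ.rc K₁ + Λ.rc K₂ + ε := by
      have e₁ : Λ.rc K₁ = sInf (Λ.L '' Adm K₁) := rfl
      have e₂ : Λ.rc K₂ = sInf (Λ.L '' Adm K₂) := rfl
      rw [e₁, e₂]; linarith

lemma rc_union_disjoint {K₁ K₂ : Set E} (h₁ : IsClosed K₁) (h₂ : IsClosed K₂)
    (hd : Disjoint K₁ K₂) : Λ.rc K₁ + Λ.rc K₂ ≤ Λ.rc (K₁ ∪ K₂) := by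
  obtain ⟨u, hu0, hu1, hu01⟩ := exists_continuous_zero_one_of_isClosed h₁ h₂ hd
  set U : E →ᵇ ℝ := mkOfCompact u with hU
  refine Λ.le_rc fun f hf => ?_
  have hsplit : f * (1 - U) + f * U = f := by ext x; simp; ring
  have hUx : ∀ x, U x = u x := fun x => rfl
  have hadm₁ : f * (1 - U) ∈ Adm (E := E) K₁ := by
    constructor
    · rw [nonneg_iff]
      intro x
      have h1 := nonneg_iff.mp hf.1 x
      have h2 := (hu01 x).2
      have e : (f * (1 - U)) x = f x * (1 - u x) := by
        show f x * ((1:E →ᵇ ℝ) x - U x) = _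
        rw [hUx]; simp
      rw [e]
      exact mul_nonneg h1 (by linarith)
    · intro x hx
      have h1 := hf.2 x (Or.inl hx)
      have h0 : u x = 0 := hu0 hx
      have e : (f * (1 - U)) x = f x * (1 - u x) := by
        show f x * ((1:E →ᵇ ℝ) x - U x) = _
        rw [hUx]; simp
      rw [e, h0]
      simpa using h1
  have hadm₂ : f * U ∈ Adm (E := E) K₂ := by
    constructor
    · rw [nonneg_iff]
      intro x
      have h1 := nonneg_iff.mp hf.1 x
      have h2 := (hu01 x).1
      have e : (f * U) x = f x * u x := by rw [show (f * U) x = f x * U x from rfl, hUx]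
      rw [e]
      exact mul_nonneg h1 h2
    · intro x hx
      have h1 := hf.2 x (Or.inr hx)
      have h0 : u x = 1 := hu1 hx
      have e : (f * U) x = f x * u x := by rw [show (f * U) x = f x * U x from rfl, hUx]
      rw [e, h0, mul_one]
      exact h1
  calc Λ.rc K₁ + Λ.rc K₂ ≤ Λ.L (f * (1 - U)) + Λ.L (f * U) :=
        add_le_add (Λ.rc_le hadm₁) (Λ.rc_le hadm₂)
  _ = Λ.L f := by rw [← Λ.add' _ _, hsplit]

lemma L_le_rc {K : Set E} {h : E →ᵇ ℝ} (h0 : 0 ≤ h) (hb : ∀ x, h x ≤ 1)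
    (hv : ∀ x, x ∉ K → h x = 0) : Λ.L h ≤ Λ.rc K := by
  refine le_csInf (Λ.adm_nonempty K) ?_
  rintro r ⟨g, hg, rfl⟩
  refine Λ.mono' (le_iff.mpr fun x => ?_)
  by_cases hx : x ∈ K
  · exact le_trans (hb x) (hg.2 x hx)
  · rw [hv x hx]; exact nonneg_iff.mp hg.1 x

section Measure

variable [MeasurableSpace E] [BorelSpace E]

/-- The content associated with a positive linear functional. -/
noncomputable def content : Content E where
  toFun K := (Λ.rc K).toNNReal
  mono' K₁ K₂ h := Real.toNNReal_mono (Λ.rc_mono h)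
  sup_disjoint' K₁ K₂ hd hc₁ hc₂ := by
    show (Λ.rc ((K₁ ⊔ K₂ : TopologicalSpace.Compacts E) : Set E)).toNNReal
      = (Λ.rc (K₁ : Set E)).toNNReal + (Λ.rc (K₂ : Set E)).toNNReal
    have h1 : ((K₁ ⊔ K₂ : TopologicalSpace.Compacts E) : Set E) = (K₁ : Set E) ∪ K₂ :=
      TopologicalSpace.Compacts.coe_sup K₁ K₂
    have h2 := Λ.rc_union_le (K₁ : Set E) K₂
    have h3 := Λ.rc_union_disjoint hc₁ hc₂ hd
    rw [h1, show Λ.rc ((K₁ : Set E) ∪ K₂) = Λ.rc K₁ + Λ.rc K₂ from le_antisymm h2 h3,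
      Real.toNNReal_add (Λ.rc_nonneg _) (Λ.rc_nonneg _)]
  sup_le' K₁ K₂ := by
    show (Λ.rc ((K₁ ⊔ K₂ : TopologicalSpace.Compacts E) : Set E)).toNNReal
      ≤ (Λ.rc (K₁ : Set E)).toNNReal + (Λ.rc (K₂ : Set E)).toNNReal
    have h1 : ((K₁ ⊔ K₂ : TopologicalSpace.Compacts E) : Set E) = (K₁ : Set E) ∪ K₂ :=
      TopologicalSpace.Compacts.coe_sup K₁ K₂
    have h2 := Λ.rc_union_le (K₁ : Set E) K₂
    rw [← Real.toNNReal_add (Λ.rc_nonneg _) (Λ.rc_nonneg _)]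
    exact Real.toNNReal_mono (by rw [h1]; linarith)

/-- The measure associated with a positive linear functional. -/
noncomputable def measure : Measure E := Λ.content.measure

lemma ofReal_rc_le_measure {K U : Set E} (hK : IsCompact K) (hU : IsOpen U) (hKU : K ⊆ U) :
    ENNReal.ofReal (Λ.rc K) ≤ Λ.measure U :=
  calc ENNReal.ofReal (Λ.rc K)
      = (Λ.content) ⟨K, hK⟩ := rfl
  _ ≤ Λ.content.innerContent ⟨U, hU⟩ := Λ.content.le_innerContent _ _ hKU
  _ = Λ.content.outerMeasure U := (Λ.content.outerMeasure_of_isOpen U hU).symm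
  _ = Λ.measure U := (Content.measure_apply _ hU.measurableSet).symm

lemma measure_univ' : Λ.measure (univ : Set E) = 1 := by
  have e1 : Λ.measure (univ : Set E) = Λ.content.outerMeasure univ :=
    Content.measure_apply _ MeasurableSet.univ
  have e2 : Λ.content.outerMeasure univ = Λ.content.innerContent ⟨univ, isOpen_univ⟩ :=
    Λ.content.outerMeasure_of_isOpen univ isOpen_univ
  have e3 := Λ.content.innerContent_of_isCompact (K := (univ : Set E)) isCompact_univ isOpen_univ
  rw [e1, e2, e3]
  show (((Λ.rc (univ : Set E)).toNNReal : ℝ≥0) : ℝ≥0∞) = 1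
  rw [Λ.rc_univ]
  simp

instance : IsProbabilityMeasure Λ.measure := ⟨Λ.measure_univ'⟩

theorem L_le_integral (f : E →ᵇ ℝ) (hf : 0 ≤ f) : Λ.L f ≤ ∫ x, f x ∂Λ.measure := by
  have hfx0 : ∀ x, 0 ≤ f x := nonneg_iff.mp hf
  have hfxM : ∀ x, f x ≤ ‖f‖ := fun x =>
    (abs_le.mp (by simpa [Real.norm_eq_abs] using f.norm_coe_le_norm x)).2
  refine le_of_forall_pos_le_add fun ε hε => ?_
  set m := Λ.measure with hm
  set M : ℝ := ‖f‖ with hMdef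
  have hM1 : (0:ℝ) < M + 1 := by positivity
  set N : ℕ := ⌈2*(M+1)/ε⌉₊ with hN
  set s : ℝ := (M+1)/(N+1) with hsdef
  have hNpos : (0:ℝ) < (N:ℝ) + 1 := by positivity
  have hs0 : 0 < s := div_pos hM1 hNpos
  have hsε : 2*s ≤ ε := by
    have h1 : (2*(M+1)/ε : ℝ) ≤ (N:ℝ) + 1 := (Nat.le_ceil _).trans (by linarith)
    have h2 : 2*(M+1) ≤ ((N:ℝ)+1) * ε := by
      rw [div_le_iff₀ hε] at h1; linarith
    have h3 : 2*s * ((N:ℝ)+1) ≤ ε * ((N:ℝ)+1) := by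
      rw [hsdef]
      calc 2 * ((M+1)/((N:ℝ)+1)) * ((N:ℝ)+1) = 2*(M+1) := by field_simp
      _ ≤ ((N:ℝ)+1) * ε := h2
      _ = ε * ((N:ℝ)+1) := by ring
    exact le_of_mul_le_mul_right h3 hNpos
  -- the staircase functions
  set F : ℕ → (E →ᵇ ℝ) := fun i => f ⊓ const E ((i:ℝ)*s) with hF
  set g : ℕ → (E →ᵇ ℝ) := fun i => F (i+1) - F i with hg
  have hFx : ∀ (i : ℕ) (x : E), F i x = min (f x) ((i:ℝ)*s) := fun i x => rfl
  have hgx : ∀ (i : ℕ) (x : E), g i x = min (f x) (((i:ℝ)+1)*s) - min (f x) ((i:ℝ)*s) := by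
    intro i x
    have e : g i x = F (i+1) x - F i x := rfl
    rw [e, hFx, hFx]
    push_cast
    ring_nf
  have htel : ∑ i ∈ Finset.range (N+1), g i = f := by
    rw [hg, Finset.sum_range_sub F (N+1)]
    have hval : (((N+1:ℕ)):ℝ)*s = M + 1 := by push_cast; rw [hsdef]; field_simp
    have hFn : F (N+1) = f := by
      refine inf_eq_left.mpr (le_iff.mpr fun x => ?_)
      simp only [BoundedContinuousFunction.const_apply, hval]
      linarith [hfxM x]
    have hF0 : F 0 = 0 := by
      ext x
      have e : F 0 x = f x ⊓ (((0:ℕ):ℝ)*s) := hFx 0 x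
      simp only [Nat.cast_zero, zero_mul] at e
      rw [e, inf_eq_right.mpr (hfx0 x)]
      simp
    rw [hFn, hF0, sub_zero]
  -- compact level sets and open enlargements
  set K : ℕ → Set E := fun i => {x | (i:ℝ)*s ≤ f x} with hK
  set V : ℕ → Set E := fun i => {x | (i:ℝ)*s - s < f x} with hV
  have hKc : ∀ i, IsCompact (K i) := fun i =>
    (isClosed_le continuous_const f.continuous).isCompact
  have hVo : ∀ i, IsOpen (V i) := fun i =>
    isOpen_lt continuous_const f.continuous
  have hKV : ∀ i, K i ⊆ V i := fun i x hx => by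
    simp only [hK, hV, mem_setOf_eq] at *
    linarith
  -- bound L (g i)
  have hg0 : ∀ (i : ℕ), (0:E →ᵇ ℝ) ≤ g i := by
    intro i
    refine nonneg_iff.mpr fun x => ?_
    rw [hgx]
    have : min (f x) ((i:ℝ)*s) ≤ min (f x) (((i:ℝ)+1)*s) :=
      min_le_min le_rfl (by nlinarith)
    linarith
  have hgs : ∀ (i : ℕ) (x : E), g i x ≤ s := by
    intro i x
    rw [hgx]
    rcases le_total (f x) ((i:ℝ)*s) with h | h
    · rw [min_eq_left h, min_eq_left (by nlinarith)]
      linarith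
    · rw [min_eq_right h]
      have : min (f x) (((i:ℝ)+1)*s) ≤ ((i:ℝ)+1)*s := min_le_right _ _
      nlinarith
  have hgv : ∀ (i : ℕ) (x : E), x ∉ K i → g i x = 0 := by
    intro i x hx
    simp only [hK, mem_setOf_eq, not_le] at hx
    rw [hgx, min_eq_left (by nlinarith), min_eq_left (by linarith)]
    ring
  have hLg : ∀ i : ℕ, Λ.L (g i) ≤ s * Λ.rc (K i) := by
    intro i
    have hrepr : g i = s • (s⁻¹ • g i) := (smul_inv_smul₀ hs0.ne' _).symm
    have hL1 : Λ.L (s⁻¹ • g i) ≤ Λ.rc (K i) := by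
      refine Λ.L_le_rc ?_ ?_ ?_
      · refine nonneg_iff.mpr fun x => ?_
        have := nonneg_iff.mp (hg0 i) x
        have e : (s⁻¹ • g i) x = s⁻¹ * g i x := rfl
        rw [e]
        positivity
      · intro x
        have e : (s⁻¹ • g i) x = s⁻¹ * g i x := rfl
        rw [e, inv_mul_le_iff₀ hs0, mul_one]
        exact hgs i x
      · intro x hx
        have e : (s⁻¹ • g i) x = s⁻¹ * g i x := rfl
        rw [e, hgv i x hx, mul_zero]
    calc Λ.L (g i) = s * Λ.L (s⁻¹ • g i) := by conv_lhs => rw [hrepr, Λ.smul']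
    _ ≤ s * Λ.rc (K i) := mul_le_mul_of_nonneg_left hL1 hs0.le
  -- relate rc (K i) to the measure of V i
  have hmV : ∀ i, m (V i) ≠ ⊤ := fun i => (measure_lt_top m _).ne
  have hrcm : ∀ i : ℕ, Λ.rc (K i) ≤ (m (V i)).toReal := by
    intro i
    have h1 := Λ.ofReal_rc_le_measure (hKc i) (hVo i) (hKV i)
    have h2 := ENNReal.toReal_mono (hmV i) h1
    rwa [ENNReal.toReal_ofReal (Λ.rc_nonneg _)] at h2
  -- first bound
  have hbound1 : Λ.L f ≤ ∑ i ∈ Finset.range (N+1), s * (m (V i)).toReal := by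
    calc Λ.L f = ∑ i ∈ Finset.range (N+1), Λ.L (g i) := by rw [← Λ.sum', htel]
    _ ≤ ∑ i ∈ Finset.range (N+1), s * Λ.rc (K i) :=
        Finset.sum_le_sum fun i _ => hLg i
    _ ≤ ∑ i ∈ Finset.range (N+1), s * (m (V i)).toReal :=
        Finset.sum_le_sum fun i _ => mul_le_mul_of_nonneg_left (hrcm i) hs0.le
  -- second bound: comparing with the integral
  have hWmeas : ∀ i, MeasurableSet (V i) := fun i => (hVo i).measurableSet
  have hV0 : V 0 = univ := by
    ext x
    simp only [hV, mem_setOf_eq, mem_univ, iff_true, Nat.cast_zero, zero_mul]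
    linarith [hfx0 x]
  have hVsucc : ∀ j : ℕ, V (j+1) = {x | (j:ℝ)*s < f x} := by
    intro j
    ext x
    simp only [hV, mem_setOf_eq]
    push_cast
    constructor <;> intro h <;> linarith
  have hind : ∀ j : ℕ, Integrable ((V (j+1)).indicator (fun _ => s)) m :=
    fun j => (integrable_const s).indicator (hWmeas (j+1))
  have hintegr : Integrable (fun x => ∑ j ∈ Finset.range N,
      (V (j+1)).indicator (fun _ => s) x) m := by
    apply integrable_finset_sum
    exact fun j _ => hind j
  have hindint : ∫ x, (∑ j ∈ Finset.range N, (V (j+1)).indicator (fun _ => s) x) ∂m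
      = ∑ j ∈ Finset.range N, s * (m (V (j+1))).toReal := by
    rw [integral_finset_sum _ (fun j _ => hind j)]
    refine Finset.sum_congr rfl fun j _ => ?_
    rw [integral_indicator (hWmeas (j+1)), setIntegral_const, smul_eq_mul, measureReal_def]
    ring
  have hpt : ∀ x, (∑ j ∈ Finset.range N, (V (j+1)).indicator (fun _ => s) x) ≤ f x + s := by
    intro x
    have heach : ∀ j : ℕ, (V (j+1)).indicator (fun _ : E => s) x
        = if (j:ℝ)*s < f x then s else 0 := by
      intro j
      rw [hVsucc j]
      by_cases h : (j:ℝ)*s < f x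
      · rw [if_pos h, indicator_of_mem (by exact h)]
      · rw [if_neg h, indicator_of_notMem (by exact h)]
    have hcardb : (((Finset.range N).filter (fun j : ℕ => (j:ℝ)*s < f x)).card : ℝ) * s
        ≤ (⌈f x / s⌉₊ : ℝ) * s := by
      have hsub : (Finset.range N).filter (fun j : ℕ => (j:ℝ)*s < f x)
          ⊆ Finset.range ⌈f x / s⌉₊ := by
        intro j hj
        rw [Finset.mem_filter] at hj
        rw [Finset.mem_range]
        exact Nat.lt_ceil.mpr ((lt_div_iff₀ hs0).mpr hj.2)
      have hcard := Finset.card_le_card hsub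
      rw [Finset.card_range] at hcard
      have := (Nat.cast_le (α := ℝ)).mpr hcard
      nlinarith [hs0.le]
    calc (∑ j ∈ Finset.range N, (V (j+1)).indicator (fun _ => s) x)
        = ∑ j ∈ Finset.range N, (if (j:ℝ)*s < f x then s else 0) :=
          Finset.sum_congr rfl fun j _ => heach j
    _ = ((Finset.range N).filter (fun j : ℕ => (j:ℝ)*s < f x)).card • s := by
        rw [Finset.sum_ite, Finset.sum_const, Finset.sum_const_zero, add_zero]
    _ = (((Finset.range N).filter (fun j : ℕ => (j:ℝ)*s < f x)).card : ℝ) * s := by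
        rw [nsmul_eq_mul]
    _ ≤ (⌈f x / s⌉₊ : ℝ) * s := hcardb
    _ ≤ f x + s := by
        have h0 : 0 ≤ f x / s := div_nonneg (hfx0 x) hs0.le
        have h1 := Nat.ceil_lt_add_one h0
        have h2 : (⌈f x / s⌉₊ : ℝ) * s ≤ (f x / s + 1) * s := by nlinarith
        have h3 : (f x / s + 1) * s = f x + s := by field_simp
        linarith
  have hsum2 : ∑ j ∈ Finset.range N, s * (m (V (j+1))).toReal ≤ (∫ x, f x ∂m) + s := by
    rw [← hindint]
    have hfint : Integrable (fun x => f x + s) m := (f.integrable m).add (integrable_const s)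
    calc ∫ x, (∑ j ∈ Finset.range N, (V (j+1)).indicator (fun _ => s) x) ∂m
        ≤ ∫ x, (f x + s) ∂m := integral_mono hintegr hfint hpt
    _ = (∫ x, f x ∂m) + s := by
        rw [integral_add (f.integrable m) (integrable_const s), integral_const]
        simp [measure_univ]
  have hsplit : ∑ i ∈ Finset.range (N+1), s * (m (V i)).toReal
      = (∑ j ∈ Finset.range N, s * (m (V (j+1))).toReal) + s * (m (V 0)).toReal :=
    Finset.sum_range_succ' _ N
  have hV0m : s * (m (V 0)).toReal = s := by rw [hV0]; simp [measure_univ]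
  calc Λ.L f ≤ ∑ i ∈ Finset.range (N+1), s * (m (V i)).toReal := hbound1
  _ = (∑ j ∈ Finset.range N, s * (m (V (j+1))).toReal) + s := by rw [hsplit, hV0m]
  _ ≤ (∫ x, f x ∂m) + s + s := by linarith
  _ ≤ (∫ x, f x ∂m) + ε := by linarith

theorem integral_eq (f : E →ᵇ ℝ) : ∫ x, f x ∂Λ.measure = Λ.L f := by
  have hnorm : ∀ g : E →ᵇ ℝ, ∀ x, g x ≤ ‖g‖ := fun g x =>
    (abs_le.mp (by simpa [Real.norm_eq_abs] using g.norm_coe_le_norm x)).2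
  have hnorm' : ∀ g : E →ᵇ ℝ, ∀ x, -‖g‖ ≤ g x := fun g x =>
    (abs_le.mp (by simpa [Real.norm_eq_abs] using g.norm_coe_le_norm x)).1
  have huniv : Λ.measure.real Set.univ = 1 := by rw [measureReal_def, Λ.measure_univ']; simp
  have hconst : ∀ c : ℝ, ∫ x, (const E c) x ∂Λ.measure = c := by
    intro c
    simp only [BoundedContinuousFunction.const_apply]
    rw [integral_const, huniv, one_smul]
  have key : ∀ g : E →ᵇ ℝ, 0 ≤ g → ∫ x, g x ∂Λ.measure = Λ.L g := by
    intro g hg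
    refine le_antisymm ?_ (Λ.L_le_integral g hg)
    have hple : 0 ≤ const E ‖g‖ - g := nonneg_iff.mpr fun x => by
      have e : (const E ‖g‖ - g) x = ‖g‖ - g x := rfl
      rw [e]
      linarith [hnorm g x]
    have h1 := Λ.L_le_integral _ hple
    have h2 : Λ.L (const E ‖g‖ - g) = ‖g‖ - Λ.L g := by
      have := Λ.add' (const E ‖g‖ - g) g
      simp only [sub_add_cancel] at this
      rw [Λ.const'] at this
      linarith
    have h3 : ∫ x, (const E ‖g‖ - g) x ∂Λ.measure = ‖g‖ - ∫ x, g x ∂Λ.measure := by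
      have e : ∀ x, (const E ‖g‖ - g) x = ‖g‖ - g x := fun x => rfl
      calc ∫ x, (const E ‖g‖ - g) x ∂Λ.measure = ∫ x, (‖g‖ - g x) ∂Λ.measure := by
            exact integral_congr_ae (Eventually.of_forall fun x => e x)
      _ = ‖g‖ - ∫ x, g x ∂Λ.measure := by
            rw [integral_sub (integrable_const _) (g.integrable _), integral_const, huniv,
              one_smul]
    rw [h2, h3] at h1
    linarith
  have hg0 : 0 ≤ f + const E ‖f‖ := nonneg_iff.mpr fun x => by
    have e : (f + const E ‖f‖) x = f x + ‖f‖ := rfl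
    rw [e]
    linarith [hnorm' f x]
  have h1 := key _ hg0
  have h2 : Λ.L (f + const E ‖f‖) = Λ.L f + ‖f‖ := by rw [Λ.add', Λ.const']
  have h3 : ∫ x, (f + const E ‖f‖) x ∂Λ.measure = (∫ x, f x ∂Λ.measure) + ‖f‖ := by
    have e : ∀ x, (f + const E ‖f‖) x = f x + ‖f‖ := fun x => rfl
    calc ∫ x, (f + const E ‖f‖) x ∂Λ.measure = ∫ x, (f x + ‖f‖) ∂Λ.measure :=
          integral_congr_ae (Eventually.of_forall fun x => e x)
    _ = (∫ x, f x ∂Λ.measure) + ‖f‖ := by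
          rw [integral_add (f.integrable _) (integrable_const _), integral_const, huniv, one_smul]
  rw [h2, h3] at h1
  linarith

theorem exists_measure : ∃ m : Measure E, IsProbabilityMeasure m ∧
    ∀ f : E →ᵇ ℝ, ∫ x, f x ∂m = Λ.L f :=
  ⟨Λ.measure, inferInstance, Λ.integral_eq⟩

end Measure

end PLF

end RMK

section Compactness

variable {E : Type*} [MetricSpace E] [CompactSpace E] [MeasurableSpace E] [BorelSpace E]

lemma integral_abs_le_norm (f : E →ᵇ ℝ) (μ : Measure E) [IsProbabilityMeasure μ] :
    (∫ x, f x ∂μ) ∈ Set.Icc (-‖f‖) ‖f‖ := by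
  have hb : ∀ x, ‖f x‖ ≤ ‖f‖ := fun x => f.norm_coe_le_norm x
  have h1 : |∫ x, f x ∂μ| ≤ ∫ x, ‖f x‖ ∂μ := by
    simpa [Real.norm_eq_abs] using norm_integral_le_integral_norm (f : E → ℝ) (μ := μ)
  have h2 : ∫ x, ‖f x‖ ∂μ ≤ ‖f‖ := by
    calc ∫ x, ‖f x‖ ∂μ ≤ ∫ _, ‖f‖ ∂μ :=
          integral_mono (f.integrable μ).norm (integrable_const _) hb
    _ = ‖f‖ := by rw [integral_const]; simp
  exact abs_le.mp (h1.trans h2)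

theorem probabilityMeasure_isCompact :
    IsCompact (Set.univ : Set (ProbabilityMeasure E)) := by
  rw [isCompact_iff_ultrafilter_le_nhds]
  intro F _
  have key : ∀ f : E →ᵇ ℝ, ∃ r : ℝ,
      Tendsto (fun μ : ProbabilityMeasure E => ∫ x, f x ∂(μ : Measure E)) (F : Filter _) (𝓝 r) := by
    intro f
    obtain ⟨r, -, hr⟩ := (isCompact_Icc (a := -‖f‖) (b := ‖f‖)).ultrafilter_le_nhds
      (F.map (fun μ : ProbabilityMeasure E => ∫ x, f x ∂(μ : Measure E)))
      (by
        rw [Ultrafilter.coe_map, le_principal_iff, Filter.mem_map]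
        exact Filter.mem_of_superset Filter.univ_mem
          (fun μ _ => integral_abs_le_norm f (μ : Measure E)))
    rw [Ultrafilter.coe_map] at hr
    exact ⟨r, hr⟩
  choose Lf hLf using key
  have hadd : ∀ f g : E →ᵇ ℝ, Lf (f + g) = Lf f + Lf g := by
    intro f g
    refine tendsto_nhds_unique (hLf (f + g)) ?_
    have e : (fun μ : ProbabilityMeasure E => ∫ x, (f + g) x ∂(μ : Measure E))
        = fun μ : ProbabilityMeasure E => (∫ x, f x ∂(μ : Measure E)) + ∫ x, g x ∂(μ : Measure E) := by
      funext μ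
      exact integral_add (f.integrable _) (g.integrable _)
    rw [e]
    exact (hLf f).add (hLf g)
  have hsmul : ∀ (c : ℝ) (f : E →ᵇ ℝ), Lf (c • f) = c * Lf f := by
    intro c f
    refine tendsto_nhds_unique (hLf (c • f)) ?_
    have e : (fun μ : ProbabilityMeasure E => ∫ x, (c • f) x ∂(μ : Measure E))
        = fun μ : ProbabilityMeasure E => c * ∫ x, f x ∂(μ : Measure E) := by
      funext μ
      show ∫ x, c • f x ∂(μ : Measure E) = c * ∫ x, f x ∂(μ : Measure E)
      rw [integral_smul, smul_eq_mul]
    rw [e]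
    exact (hLf f).const_mul c
  have hpos : ∀ f : E →ᵇ ℝ, 0 ≤ f → 0 ≤ Lf f := by
    intro f hf
    refine ge_of_tendsto (hLf f) (Eventually.of_forall fun μ => ?_)
    exact integral_nonneg fun x => PLF.nonneg_iff.mp hf x
  have hone : Lf 1 = 1 := by
    refine tendsto_nhds_unique (hLf 1) ?_
    have e : (fun μ : ProbabilityMeasure E => ∫ x, (1 : E →ᵇ ℝ) x ∂(μ : Measure E))
        = fun _ : ProbabilityMeasure E => (1 : ℝ) := by
      funext μ
      show ∫ _, (1:ℝ) ∂(μ : Measure E) = 1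
      rw [integral_const]
      simp
    rw [e]
    exact tendsto_const_nhds
  obtain ⟨m, hm, hint⟩ := (PLF.mk Lf hadd hsmul hpos hone).exists_measure
  refine ⟨⟨m, hm⟩, Set.mem_univ _, ?_⟩
  have : Tendsto (id : ProbabilityMeasure E → ProbabilityMeasure E) (F : Filter _)
      (𝓝 (⟨m, hm⟩ : ProbabilityMeasure E)) := by
    refine ProbabilityMeasure.tendsto_iff_forall_integral_tendsto.mpr fun f => ?_
    have e : ∫ x, f x ∂((⟨m, hm⟩ : ProbabilityMeasure E) : Measure E) = Lf f := hint f
    have h2 := hLf f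
    rw [← e] at h2
    exact h2
  exact fun s hs => this hs

instance : CompactSpace (ProbabilityMeasure E) := ⟨probabilityMeasure_isCompact⟩

lemma continuous_lintegralP (g : E →ᵇ ℝ≥0) :
    Continuous fun μ : ProbabilityMeasure E => ∫⁻ x, (g x : ℝ≥0∞) ∂(μ : Measure E) := by
  have h1 : Continuous fun μ : ProbabilityMeasure E =>
      ((μ.toFiniteMeasure.testAgainstNN g : ℝ≥0) : ℝ≥0∞) :=
    ENNReal.continuous_coe.comp (ProbabilityMeasure.continuous_testAgainstNN_eval g)
  have e : (fun μ : ProbabilityMeasure E => ((μ.toFiniteMeasure.testAgainstNN g : ℝ≥0) : ℝ≥0∞))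
      = fun μ : ProbabilityMeasure E => ∫⁻ x, (g x : ℝ≥0∞) ∂(μ : Measure E) := by
    funext μ
    rw [FiniteMeasure.testAgainstNN, ENNReal.coe_toNNReal]
    · rfl
    · exact (g.lintegral_lt_top_of_nnreal _).ne
  rwa [e] at h1

theorem measurable_comp_toMeasure {α : Type*} [TopologicalSpace α] [MeasurableSpace α]
    [OpensMeasurableSpace α] {u : α → ProbabilityMeasure E} (hu : Continuous u) :
    Measurable (fun a => (u a : Measure E)) := by
  apply Measure.measurable_of_measurable_coe
  have hgen : (inferInstance : MeasurableSpace E)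
      = MeasurableSpace.generateFrom {t : Set E | IsClosed t} := by
    rw [BorelSpace.measurable_eq (α := E), borel_eq_generateFrom_isClosed]
  have hpi : IsPiSystem {t : Set E | IsClosed t} := fun s hs t ht _ => hs.inter ht
  intro s hs
  refine MeasurableSpace.induction_on_inter
    (C := fun t _ => Measurable fun a : α => (u a : Measure E) t) hgen hpi
    ?_ ?_ ?_ ?_ s hs
  · simp only [measure_empty]; exact measurable_const
  · intro t ht
    have ht' : IsClosed t := ht
    have hmeas : ∀ n, Measurable fun a : α =>
        ∫⁻ x, (ht'.apprSeq n x : ℝ≥0∞) ∂(u a : Measure E) :=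
      fun n => ((continuous_lintegralP (ht'.apprSeq n)).comp hu).measurable
    refine ENNReal.measurable_of_tendsto hmeas ?_
    rw [tendsto_pi_nhds]
    intro a
    exact HasOuterApproxClosed.tendsto_lintegral_apprSeq ht' (u a : Measure E)
  · intro t htm hC
    have e : (fun a : α => (u a : Measure E) tᶜ)
        = fun a : α => 1 - (u a : Measure E) t := by
      funext μ
      rw [measure_compl htm (measure_ne_top _ t), measure_univ]
    rw [e]
    exact measurable_const.sub hC
  · intro g hdisj hmeas hC
    have e : (fun a : α => (u a : Measure E) (⋃ i, g i))
        = fun a : α => ∑' i, (u a : Measure E) (g i) := by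
      funext μ
      exact measure_iUnion hdisj hmeas
    rw [e]
    exact Measurable.ennreal_tsum hC

end Compactness

section Bind

variable {E : Type*} [MetricSpace E] [CompactSpace E] [MeasurableSpace E] [BorelSpace E]

lemma integral_bind_bcf {α : Type*} [MeasurableSpace α]
    (m : Measure α) [IsProbabilityMeasure m] (κ : α → Measure E) (hκ : Measurable κ)
    (hκp : ∀ a, IsProbabilityMeasure (κ a)) (f : E →ᵇ ℝ) :
    ∫ ξ, f ξ ∂(m.bind κ) = ∫ a, (∫ ξ, f ξ ∂(κ a)) ∂m := by
  have hbp : IsProbabilityMeasure (m.bind κ) := by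
    constructor
    rw [Measure.bind_apply MeasurableSet.univ hκ.aemeasurable]
    have hone : ∀ a, κ a Set.univ = 1 := fun a => (hκp a).measure_univ
    simp [hone]
  have key : ∀ g : E →ᵇ ℝ, 0 ≤ g →
      ∫ ξ, g ξ ∂(m.bind κ) = ∫ a, (∫ ξ, g ξ ∂(κ a)) ∂m := by
    intro g hgnn
    have hg0 : ∀ x, 0 ≤ g x := PLF.nonneg_iff.mp hgnn
    have hmg : Measurable fun ξ : E => ENNReal.ofReal (g ξ) :=
      ENNReal.measurable_ofReal.comp g.continuous.measurable
    have hmgen : Measurable fun a => ∫⁻ ξ, ENNReal.ofReal (g ξ) ∂(κ a) :=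
      (Measure.measurable_lintegral hmg).comp hκ
    have l1 : ∫ ξ, g ξ ∂(m.bind κ)
        = (∫⁻ ξ, ENNReal.ofReal (g ξ) ∂(m.bind κ)).toReal :=
      integral_eq_lintegral_of_nonneg_ae (Eventually.of_forall hg0)
        g.continuous.measurable.aestronglyMeasurable
    have hGfin : ∀ a, (∫⁻ ξ, ENNReal.ofReal (g ξ) ∂(κ a)) < ⊤ := fun a => by
      haveI := hκp a
      exact g.lintegral_of_real_lt_top (κ a)
    rw [l1, Measure.lintegral_bind hκ.aemeasurable hmg.aemeasurable,
      ← integral_toReal hmgen.aemeasurable (Eventually.of_forall hGfin)]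
    refine integral_congr_ae (Eventually.of_forall fun a => ?_)
    haveI := hκp a
    exact (integral_eq_lintegral_of_nonneg_ae (Eventually.of_forall hg0)
      g.continuous.measurable.aestronglyMeasurable).symm
  set g := f + const E ‖f‖ with hgdef
  have hgball : ∀ x, -‖f‖ ≤ f x ∧ f x ≤ ‖f‖ := fun x =>
    abs_le.mp (by simpa [Real.norm_eq_abs] using f.norm_coe_le_norm x)
  have hgnn : 0 ≤ g := PLF.nonneg_iff.mpr fun x => by
    have e : g x = f x + ‖f‖ := rfl
    rw [e]
    linarith [(hgball x).1]
  have h1 := key g hgnn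
  have hLHS : ∫ ξ, g ξ ∂(m.bind κ) = (∫ ξ, f ξ ∂(m.bind κ)) + ‖f‖ := by
    have e : ∀ ξ, g ξ = f ξ + ‖f‖ := fun ξ => rfl
    rw [integral_congr_ae (Eventually.of_forall e),
      integral_add (f.integrable _) (integrable_const _), integral_const]
    simp
  have hmeasInt : Measurable fun a => ∫ ξ, f ξ ∂(κ a) := by
    have e : (fun a => ∫ ξ, f ξ ∂(κ a))
        = fun a => (∫⁻ ξ, ENNReal.ofReal (g ξ) ∂(κ a)).toReal - ‖f‖ := by
      funext a
      haveI := hκp a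
      have e1 : ∫ ξ, g ξ ∂(κ a) = (∫⁻ ξ, ENNReal.ofReal (g ξ) ∂(κ a)).toReal :=
        integral_eq_lintegral_of_nonneg_ae (Eventually.of_forall (PLF.nonneg_iff.mp hgnn))
          g.continuous.measurable.aestronglyMeasurable
      have e2 : ∫ ξ, g ξ ∂(κ a) = (∫ ξ, f ξ ∂(κ a)) + ‖f‖ := by
        have e' : ∀ ξ, g ξ = f ξ + ‖f‖ := fun ξ => rfl
        rw [integral_congr_ae (Eventually.of_forall e'),
          integral_add (f.integrable _) (integrable_const _), integral_const]
        simp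
      linarith
    rw [e]
    have hmg : Measurable fun ξ : E => ENNReal.ofReal (g ξ) :=
      ENNReal.measurable_ofReal.comp g.continuous.measurable
    exact (((Measure.measurable_lintegral hmg).comp hκ).ennreal_toReal).sub measurable_const
  have hbdd : Integrable (fun a => ∫ ξ, f ξ ∂(κ a)) m := by
    refine (integrable_const ‖f‖).mono' hmeasInt.aestronglyMeasurable
      (Eventually.of_forall fun a => ?_)
    haveI := hκp a
    have h := integral_abs_le_norm f (κ a)
    rw [Real.norm_eq_abs]
    exact abs_le.mpr ⟨h.1, h.2⟩
  have hRHS : ∫ a, (∫ ξ, g ξ ∂(κ a)) ∂m = (∫ a, (∫ ξ, f ξ ∂(κ a)) ∂m) + ‖f‖ := by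
    have e : ∀ a, ∫ ξ, g ξ ∂(κ a) = (∫ ξ, f ξ ∂(κ a)) + ‖f‖ := fun a => by
      haveI := hκp a
      have e' : ∀ ξ, g ξ = f ξ + ‖f‖ := fun ξ => rfl
      rw [integral_congr_ae (Eventually.of_forall e'),
        integral_add (f.integrable _) (integrable_const _), integral_const]
      simp
    rw [integral_congr_ae (Eventually.of_forall e),
      integral_add hbdd (integrable_const _), integral_const]
    simp
  rw [hLHS, hRHS] at h1
  linarith

end Bind

theorem stmt_10 {E : Type*} [MetricSpace E] [CompactSpace E] [MeasurableSpace E] [BorelSpace E]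
    (a : E) (φ : ℕ → E → ℝ) (hφc : ∀ j, Continuous (φ j)) (hφa : ∀ j, φ j a = 1)
    (hsep : ∀ μ ρ : Measure E, IsFiniteMeasure μ → IsFiniteMeasure ρ →
      (∀ j, ∫ x, φ j x ∂μ = ∫ x, φ j x ∂ρ) → μ = ρ)
    (ν : E → E → ProbabilityMeasure E)
    (hprod : ∀ (x y : E) (j : ℕ), ∫ ξ, φ j ξ ∂(ν x y : Measure E) = φ j x * φ j y) :
    ∃ conv : ProbabilityMeasure E → ProbabilityMeasure E → ProbabilityMeasure E,
      (∀ (μ ρ : ProbabilityMeasure E) (f : E → ℝ), Continuous f →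
        ∫ ξ, f ξ ∂(conv μ ρ : Measure E)
          = ∫ x, (∫ y, (∫ ξ, f ξ ∂(ν x y : Measure E)) ∂(ρ : Measure E)) ∂(μ : Measure E)) ∧
      (∀ (μ ρ σ : ProbabilityMeasure E),
        (∀ f : E → ℝ, Continuous f →
          ∫ ξ, f ξ ∂(σ : Measure E)
            = ∫ x, (∫ y, (∫ ξ, f ξ ∂(ν x y : Measure E)) ∂(ρ : Measure E)) ∂(μ : Measure E)) →
        σ = conv μ ρ) ∧
      (∀ μ ρ, conv μ ρ = conv ρ μ) ∧
      (∀ μ ρ σ, conv (conv μ ρ) σ = conv μ (conv ρ σ)) ∧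
      (∀ μ, conv (⟨Measure.dirac a, inferInstance⟩ : ProbabilityMeasure E) μ = μ) ∧
      Continuous (fun p : ProbabilityMeasure E × ProbabilityMeasure E => conv p.1 p.2) ∧
      (∀ (μ ρ : ProbabilityMeasure E) (j : ℕ),
        ∫ ξ, φ j ξ ∂(conv μ ρ : Measure E)
          = (∫ x, φ j x ∂(μ : Measure E)) * (∫ y, φ j y ∂(ρ : Measure E))) := by
  classical
  set Φ : ℕ → (E →ᵇ ℝ) := fun j => BoundedContinuousFunction.mkOfCompact ⟨φ j, hφc j⟩ with hΦ
  have hΦapply : ∀ (j : ℕ) (x : E), Φ j x = φ j x := fun j x => rfl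
  -- separation for probability measures
  have key : ∀ σ τ : ProbabilityMeasure E,
      (∀ j, ∫ x, φ j x ∂(σ : Measure E) = ∫ x, φ j x ∂(τ : Measure E)) → σ = τ := by
    intro σ τ h
    exact ProbabilityMeasure.toMeasure_injective (hsep _ _ inferInstance inferInstance h)
  -- the moment map is a closed embedding
  set T : ProbabilityMeasure E → (ℕ → ℝ) := fun μ j => ∫ x, φ j x ∂(μ : Measure E) with hT
  have hTcont : Continuous T := by
    refine continuous_pi fun j => ?_
    exact ProbabilityMeasure.continuous_integral_boundedContinuousFunction (Φ j)
  have hTinj : Function.Injective T := fun σ τ h => key σ τ fun j => congrFun h j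
  have hTemb := hTcont.isClosedEmbedding hTinj
  -- continuity of the kernel
  have hν : Continuous (fun p : E × E => ν p.1 p.2) := by
    rw [hTemb.toIsEmbedding.toIsInducing.continuous_iff]
    have e : (T ∘ fun p : E × E => ν p.1 p.2)
        = fun p : E × E => fun j => φ j p.1 * φ j p.2 := by
      funext p j
      exact hprod p.1 p.2 j
    rw [e]
    exact continuous_pi fun j =>
      ((hφc j).comp continuous_fst).mul ((hφc j).comp continuous_snd)
  have hκmeas : Measurable (fun p : E × E => ((ν p.1 p.2 : ProbabilityMeasure E) : Measure E)) :=
    measurable_comp_toMeasure hν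
  have hκp : ∀ p : E × E, IsProbabilityMeasure ((ν p.1 p.2 : ProbabilityMeasure E) : Measure E) :=
    fun p => inferInstance
  -- the convolution
  have hconvP : ∀ μ ρ : ProbabilityMeasure E,
      IsProbabilityMeasure (((μ : Measure E).prod (ρ : Measure E)).bind
        (fun p : E × E => ((ν p.1 p.2 : ProbabilityMeasure E) : Measure E))) := by
    intro μ ρ
    constructor
    rw [Measure.bind_apply MeasurableSet.univ hκmeas.aemeasurable]
    have hone : ∀ p : E × E, ((ν p.1 p.2 : ProbabilityMeasure E) : Measure E) Set.univ = 1 :=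
      fun p => measure_univ
    simp [hone]
  set conv : ProbabilityMeasure E → ProbabilityMeasure E → ProbabilityMeasure E :=
    fun μ ρ => ⟨((μ : Measure E).prod (ρ : Measure E)).bind
      (fun p : E × E => ((ν p.1 p.2 : ProbabilityMeasure E) : Measure E)), hconvP μ ρ⟩ with hconv
  -- the integral identity for bounded continuous functions
  have hform : ∀ (μ ρ : ProbabilityMeasure E) (f : E →ᵇ ℝ),
      ∫ ξ, f ξ ∂(conv μ ρ : Measure E)
        = ∫ x, (∫ y, (∫ ξ, f ξ ∂(ν x y : Measure E)) ∂(ρ : Measure E)) ∂(μ : Measure E) := by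
    intro μ ρ f
    have h1 : ∫ ξ, f ξ ∂(conv μ ρ : Measure E)
        = ∫ p, (∫ ξ, f ξ ∂((ν p.1 p.2 : ProbabilityMeasure E) : Measure E))
            ∂((μ : Measure E).prod (ρ : Measure E)) :=
      integral_bind_bcf _ _ hκmeas hκp f
    have hhc : Continuous (fun p : E × E => ∫ ξ, f ξ ∂(ν p.1 p.2 : Measure E)) :=
      (ProbabilityMeasure.continuous_integral_boundedContinuousFunction f).comp hν
    have hint : Integrable (fun p : E × E => ∫ ξ, f ξ ∂(ν p.1 p.2 : Measure E))
        ((μ : Measure E).prod (ρ : Measure E)) :=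
      (BoundedContinuousFunction.mkOfCompact ⟨_, hhc⟩).integrable _
    rw [h1, MeasureTheory.integral_prod _ hint]
  -- moments of the triple integral
  have hRHSj : ∀ (μ ρ : ProbabilityMeasure E) (j : ℕ),
      ∫ x, (∫ y, (∫ ξ, φ j ξ ∂(ν x y : Measure E)) ∂(ρ : Measure E)) ∂(μ : Measure E)
        = (∫ x, φ j x ∂(μ : Measure E)) * (∫ y, φ j y ∂(ρ : Measure E)) := by
    intro μ ρ j
    have e1 : ∀ x : E, (∫ y, (∫ ξ, φ j ξ ∂(ν x y : Measure E)) ∂(ρ : Measure E))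
        = φ j x * ∫ y, φ j y ∂(ρ : Measure E) := by
      intro x
      have e2 : ∀ y : E, ∫ ξ, φ j ξ ∂(ν x y : Measure E) = φ j x * φ j y :=
        fun y => hprod x y j
      rw [integral_congr_ae (Filter.Eventually.of_forall e2), MeasureTheory.integral_const_mul]
    rw [integral_congr_ae (Filter.Eventually.of_forall e1), MeasureTheory.integral_mul_const]
  have hmom : ∀ (μ ρ : ProbabilityMeasure E) (j : ℕ),
      ∫ ξ, φ j ξ ∂(conv μ ρ : Measure E)
        = (∫ x, φ j x ∂(μ : Measure E)) * (∫ y, φ j y ∂(ρ : Measure E)) := by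
    intro μ ρ j
    have h := hform μ ρ (Φ j)
    simp only [hΦapply] at h
    rw [h]
    exact hRHSj μ ρ j
  refine ⟨conv, ?_, ?_, ?_, ?_, ?_, ?_, hmom⟩
  · intro μ ρ f hf
    exact hform μ ρ (BoundedContinuousFunction.mkOfCompact ⟨f, hf⟩)
  · intro μ ρ σ hσ
    refine key σ (conv μ ρ) fun j => ?_
    rw [hσ (φ j) (hφc j), hRHSj μ ρ j, hmom μ ρ j]
  · intro μ ρ
    refine key (conv μ ρ) (conv ρ μ) fun j => ?_
    rw [hmom, hmom, mul_comm]
  · intro μ ρ σ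
    refine key _ _ fun j => ?_
    rw [hmom, hmom, hmom, hmom, mul_assoc]
  · intro μ
    refine key _ _ fun j => ?_
    refine (hmom _ μ j).trans ?_
    show (∫ x, φ j x ∂(Measure.dirac a)) * (∫ x, φ j x ∂(μ : Measure E))
      = ∫ x, φ j x ∂(μ : Measure E)
    rw [integral_dirac _ a, hφa j, one_mul]
  · rw [hTemb.toIsEmbedding.toIsInducing.continuous_iff]
    have e : (T ∘ fun p : ProbabilityMeasure E × ProbabilityMeasure E => conv p.1 p.2)
        = fun p : ProbabilityMeasure E × ProbabilityMeasure E => fun j =>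
            (∫ x, φ j x ∂(p.1 : Measure E)) * (∫ y, φ j y ∂(p.2 : Measure E)) := by
      funext p j
      exact hmom p.1 p.2 j
    rw [e]
    refine continuous_pi fun j => ?_
    have h1 : Continuous fun μ : ProbabilityMeasure E => ∫ x, φ j x ∂(μ : Measure E) :=
      ProbabilityMeasure.continuous_integral_boundedContinuousFunction (Φ j)
    exact (h1.comp continuous_fst).mul (h1.comp continuous_snd)
end

section
/- Assume that q_t(x,y,ξ) ≥ 0 for all t > 0 and x, y, ξ ∈ E, and that for each x, y ∈ E there is a Borel probability measure ν_{x,y} on E such that ∫_E f dν_{x,y} = lim_{t↓0} ∫_E f(ξ) q_t(x,y,ξ) m(dξ) for every continuous f : E → ℝ. Then the measure m is invariant for the associated generalized translations: for every continuous f : E → ℝ and every x ∈ E, ∫_E (∫_E f dν_{x,y}) m(dy) = ∫_E f dm. -/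
open MeasureTheory Filter

private lemma bound3 {E0 E1 C N M K a b c : ℝ} (hE0 : 0 < E0) (hE1 : 0 < E1)
    (hC : 0 < C) (hN : 0 < N) (hNM : N ≤ M) (hK : 0 ≤ K)
    (ha : |a| ≤ C * E1 * N) (hb : |b| ≤ C * E1 * N) (hc : |c| ≤ K * (C * E1 * N)) :
    |E0 * a * b * c / N ^ 2| ≤ E0 * E1 ^ 3 * (C ^ 3 * M * K) := by
  have h1 : |E0 * a * b * c / N ^ 2| = E0 * |a| * |b| * |c| / N ^ 2 := by
    rw [abs_div, abs_mul, abs_mul, abs_mul, abs_of_pos hE0,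
      abs_of_pos (by positivity : (0:ℝ) < N ^ 2)]
  rw [h1]
  calc E0 * |a| * |b| * |c| / N ^ 2
      ≤ E0 * (C * E1 * N) * (C * E1 * N) * (K * (C * E1 * N)) / N ^ 2 := by
        gcongr
    _ = E0 * E1 ^ 3 * (C ^ 3 * K * N) := by field_simp
    _ ≤ E0 * E1 ^ 3 * (C ^ 3 * K * M) := by gcongr
    _ = E0 * E1 ^ 3 * (C ^ 3 * M * K) := by ring

private lemma expfact (l t : ℝ) :
    Real.exp (-l * t) * Real.exp (l * (t / 6)) ^ 3 = Real.exp (-l * (t / 2)) := by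
  rw [pow_succ, pow_succ, pow_one, ← Real.exp_add, ← Real.exp_add, ← Real.exp_add]
  congr 1
  ring

set_option maxHeartbeats 1000000 in
theorem stmt_12 {E : Type*} [MetricSpace E] [CompactSpace E] [MeasurableSpace E] [BorelSpace E]
    (m : Measure E) [IsFiniteMeasure m]
    (lam : ℕ → ℝ) (hlam : ∀ j, 0 ≤ lam j)
    (hsum : ∀ t : ℝ, 0 < t → Summable fun j => Real.exp (-lam j * t))
    (φ : ℕ → E → ℝ) (hφc : ∀ j, Continuous (φ j))
    (hφpos : ∀ j, 0 < Real.sqrt (∫ z, (φ j z) ^ 2 ∂m))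
    (hφbdd : ∃ M : ℝ, ∀ j, Real.sqrt (∫ z, (φ j z) ^ 2 ∂m) ≤ M)
    (hgrowth : ∀ ε : ℝ, 0 < ε → ∃ C : ℝ, ∀ (j : ℕ) (x : E),
      |φ j x| ≤ C * Real.exp (lam j * ε) * Real.sqrt (∫ z, (φ j z) ^ 2 ∂m))
    (horth : ∀ i j : ℕ, i ≠ j → ∫ z, φ i z * φ j z ∂m = 0)
    (hone : φ 0 = fun _ => 1)
    (hq : ∀ t : ℝ, 0 < t → ∀ x y ξ : E,
      0 ≤ ∑' j, Real.exp (-lam j * t) * φ j x * φ j y * φ j ξ /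
        Real.sqrt (∫ z, (φ j z) ^ 2 ∂m) ^ 2)
    (ν : E → E → Measure E) (hνprob : ∀ x y, IsProbabilityMeasure (ν x y))
    (hνlim : ∀ (x y : E) (f : E → ℝ), Continuous f →
      Tendsto (fun t : ℝ => ∫ ξ, f ξ *
          (∑' j, Real.exp (-lam j * t) * φ j x * φ j y * φ j ξ /
            Real.sqrt (∫ z, (φ j z) ^ 2 ∂m) ^ 2) ∂m)
        (nhdsWithin 0 (Set.Ioi 0)) (nhds (∫ ξ, f ξ ∂(ν x y)))) :
    ∀ (f : E → ℝ), Continuous f → ∀ x : E,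
      ∫ y, (∫ ξ, f ξ ∂(ν x y)) ∂m = ∫ ξ, f ξ ∂m := by
  intro f hf x
  obtain ⟨M, hM⟩ := hφbdd
  have hN := hφpos
  have hM0 : 0 < M := lt_of_lt_of_le (hN 0) (hM 0)
  have hInt : ∀ g : E → ℝ, Continuous g → Integrable g m := fun g hg =>
    hg.integrable_of_hasCompactSupport (HasCompactSupport.of_compactSpace g)
  -- bound on f
  obtain ⟨B, hB0, hB⟩ : ∃ B : ℝ, 0 ≤ B ∧ ∀ ξ : E, |f ξ| ≤ B := by
    obtain ⟨B, hB⟩ := (isCompact_range hf.abs).bddAbove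
    exact ⟨B, le_trans (abs_nonneg (f x)) (hB (Set.mem_range_self x)),
      fun ξ => hB (Set.mem_range_self ξ)⟩
  -- mean of eigenfunctions vanishes
  have horth0 : ∀ j : ℕ, j ≠ 0 → ∫ z, φ j z ∂m = 0 := by
    intro j hj
    have h := horth 0 j (Ne.symm hj)
    rw [hone] at h
    simpa using h
  have hmpos : 0 < (m Set.univ).toReal := by
    have h := Real.sqrt_pos.mp (hφpos 0)
    rw [hone] at h
    simpa [measureReal_def] using h
  have hN0sq : Real.sqrt (∫ z, (φ 0 z) ^ 2 ∂m) ^ 2 = (m Set.univ).toReal := by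
    rw [hone]
    simp [Real.sq_sqrt ENNReal.toReal_nonneg, measureReal_def]
  -- growth constant
  have key : ∀ t : ℝ, 0 < t → ∃ C : ℝ, 0 < C ∧
      ∀ (j : ℕ) (z : E), |φ j z| ≤
        C * Real.exp (lam j * (t / 6)) * Real.sqrt (∫ z, (φ j z) ^ 2 ∂m) := by
    intro t ht
    obtain ⟨C, hC⟩ := hgrowth (t / 6) (by positivity)
    refine ⟨max C 1, lt_of_lt_of_le one_pos (le_max_right _ _), fun j z => (hC j z).trans ?_⟩
    have h1 := (hN j).le
    have h2 := (Real.exp_pos (lam j * (t / 6))).le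
    gcongr
    exact le_max_left _ _
  -- the main computation for each t > 0
  have main : ∀ t : ℝ, 0 < t →
      (∀ y : E, |∫ ξ, f ξ * (∑' j, Real.exp (-lam j * t) * φ j x * φ j y * φ j ξ /
          Real.sqrt (∫ z, (φ j z) ^ 2 ∂m) ^ 2) ∂m| ≤ B) ∧
      ((∫ y, (∫ ξ, f ξ * (∑' j, Real.exp (-lam j * t) * φ j x * φ j y * φ j ξ /
          Real.sqrt (∫ z, (φ j z) ^ 2 ∂m) ^ 2) ∂m) ∂m)
        = Real.exp (-lam 0 * t) * ∫ ξ, f ξ ∂m) ∧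
      Continuous (fun y : E => ∫ ξ, f ξ * (∑' j, Real.exp (-lam j * t) * φ j x * φ j y * φ j ξ /
          Real.sqrt (∫ z, (φ j z) ^ 2 ∂m) ^ 2) ∂m) := by
    intro t ht
    obtain ⟨C, hC0, hC⟩ := key t ht
    have husum : Summable (fun j => Real.exp (-lam j * (t / 2))) := hsum (t / 2) (by positivity)
    -- generic termwise bound
    have hb3 : ∀ (j : ℕ) (a b c K : ℝ), 0 ≤ K →
        |a| ≤ C * Real.exp (lam j * (t / 6)) * Real.sqrt (∫ z, (φ j z) ^ 2 ∂m) →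
        |b| ≤ C * Real.exp (lam j * (t / 6)) * Real.sqrt (∫ z, (φ j z) ^ 2 ∂m) →
        |c| ≤ K * (C * Real.exp (lam j * (t / 6)) * Real.sqrt (∫ z, (φ j z) ^ 2 ∂m)) →
        |Real.exp (-lam j * t) * a * b * c / Real.sqrt (∫ z, (φ j z) ^ 2 ∂m) ^ 2|
          ≤ Real.exp (-lam j * (t / 2)) * (C ^ 3 * M * K) := by
      intro j a b c K hK ha hb hc
      have h := bound3 (E0 := Real.exp (-lam j * t)) (Real.exp_pos _) (Real.exp_pos _) hC0 (hN j) (hM j) hK ha hb hc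
      rwa [expfact] at h
    -- continuity of the kernel in ξ
    have hQc : ∀ y : E, Continuous fun ξ : E =>
        ∑' j, Real.exp (-lam j * t) * φ j x * φ j y * φ j ξ /
          Real.sqrt (∫ z, (φ j z) ^ 2 ∂m) ^ 2 := by
      intro y
      refine continuous_tsum (fun j => ((continuous_const.mul (hφc j)).div_const _))
        (husum.mul_right (C ^ 3 * M * 1)) (fun j ξ => ?_)
      rw [Real.norm_eq_abs]
      exact hb3 j _ _ _ 1 one_pos.le (hC j x) (hC j y) (by rw [one_mul]; exact hC j ξ)
    -- swapping sum and inner integral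
    have hswap : ∀ (g : E → ℝ), Continuous g → ∀ K : ℝ, 0 ≤ K → (∀ ξ, |g ξ| ≤ K) → ∀ y : E,
        (∫ ξ, g ξ * (∑' j, Real.exp (-lam j * t) * φ j x * φ j y * φ j ξ /
            Real.sqrt (∫ z, (φ j z) ^ 2 ∂m) ^ 2) ∂m)
          = ∑' j, Real.exp (-lam j * t) * φ j x * φ j y * (∫ ξ, g ξ * φ j ξ ∂m) /
            Real.sqrt (∫ z, (φ j z) ^ 2 ∂m) ^ 2 := by
      intro g hg K hK hgK y
      have hFb : ∀ (j : ℕ) (ξ : E),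
          ‖g ξ * (Real.exp (-lam j * t) * φ j x * φ j y * φ j ξ /
            Real.sqrt (∫ z, (φ j z) ^ 2 ∂m) ^ 2)‖
            ≤ Real.exp (-lam j * (t / 2)) * (C ^ 3 * M * K) := by
        intro j ξ
        have heq : g ξ * (Real.exp (-lam j * t) * φ j x * φ j y * φ j ξ /
            Real.sqrt (∫ z, (φ j z) ^ 2 ∂m) ^ 2)
            = Real.exp (-lam j * t) * φ j x * φ j y * (g ξ * φ j ξ) /
              Real.sqrt (∫ z, (φ j z) ^ 2 ∂m) ^ 2 := by ring
        rw [Real.norm_eq_abs, heq]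
        refine hb3 j _ _ _ K hK (hC j x) (hC j y) ?_
        rw [abs_mul]
        exact mul_le_mul (hgK ξ) (hC j ξ) (abs_nonneg _) hK
      have hFint : ∀ j : ℕ, Integrable (fun ξ =>
          g ξ * (Real.exp (-lam j * t) * φ j x * φ j y * φ j ξ /
            Real.sqrt (∫ z, (φ j z) ^ 2 ∂m) ^ 2)) m :=
        fun j => hInt _ (hg.mul ((continuous_const.mul (hφc j)).div_const _))
      have hFsum : Summable fun j => ∫ ξ,
          ‖g ξ * (Real.exp (-lam j * t) * φ j x * φ j y * φ j ξ /
            Real.sqrt (∫ z, (φ j z) ^ 2 ∂m) ^ 2)‖ ∂m := by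
        refine Summable.of_nonneg_of_le (fun j => integral_nonneg fun ξ => norm_nonneg _)
          (fun j => ?_) ((husum.mul_right (C ^ 3 * M * K)).mul_right (m Set.univ).toReal)
        calc (∫ ξ, ‖g ξ * (Real.exp (-lam j * t) * φ j x * φ j y * φ j ξ /
              Real.sqrt (∫ z, (φ j z) ^ 2 ∂m) ^ 2)‖ ∂m)
            ≤ ∫ _ξ, Real.exp (-lam j * (t / 2)) * (C ^ 3 * M * K) ∂m :=
              integral_mono (hFint j).norm (integrable_const _) (fun ξ => hFb j ξ)
          _ = Real.exp (-lam j * (t / 2)) * (C ^ 3 * M * K) * (m Set.univ).toReal := by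
              rw [integral_const, smul_eq_mul, measureReal_def, mul_comm]
      simp_rw [← tsum_mul_left]
      rw [← integral_tsum_of_summable_integral_norm hFint hFsum]
      refine tsum_congr fun j => ?_
      have heq : ∀ ξ : E, g ξ * (Real.exp (-lam j * t) * φ j x * φ j y * φ j ξ /
            Real.sqrt (∫ z, (φ j z) ^ 2 ∂m) ^ 2)
          = (Real.exp (-lam j * t) * φ j x * φ j y / Real.sqrt (∫ z, (φ j z) ^ 2 ∂m) ^ 2) *
            (g ξ * φ j ξ) := fun ξ => by ring
      simp_rw [heq, integral_const_mul]
      ring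
    -- integral of the kernel in ξ
    have hQint : ∀ y : E, (∫ ξ, (∑' j, Real.exp (-lam j * t) * φ j x * φ j y * φ j ξ /
        Real.sqrt (∫ z, (φ j z) ^ 2 ∂m) ^ 2) ∂m) = Real.exp (-lam 0 * t) := by
      intro y
      have h1 := hswap (fun _ => 1) continuous_const 1 one_pos.le (fun ξ => by norm_num) y
      simp only [one_mul] at h1
      rw [h1, tsum_eq_single 0]
      · rw [hN0sq]
        have hx0 : φ 0 x = 1 := by rw [hone]
        have hy0 : φ 0 y = 1 := by rw [hone]
        rw [hx0, hy0, hone]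
        simp only [integral_const, smul_eq_mul, mul_one, measureReal_def]
        field_simp
      · intro j hj
        rw [horth0 j hj]
        simp
    -- the bound
    have hbound : ∀ y : E, |∫ ξ, f ξ * (∑' j, Real.exp (-lam j * t) * φ j x * φ j y * φ j ξ /
        Real.sqrt (∫ z, (φ j z) ^ 2 ∂m) ^ 2) ∂m| ≤ B := by
      intro y
      have hQi : Integrable (fun ξ => ∑' j, Real.exp (-lam j * t) * φ j x * φ j y * φ j ξ /
          Real.sqrt (∫ z, (φ j z) ^ 2 ∂m) ^ 2) m := hInt _ (hQc y)
      calc |∫ ξ, f ξ * (∑' j, Real.exp (-lam j * t) * φ j x * φ j y * φ j ξ /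
            Real.sqrt (∫ z, (φ j z) ^ 2 ∂m) ^ 2) ∂m|
          ≤ ∫ ξ, |f ξ * (∑' j, Real.exp (-lam j * t) * φ j x * φ j y * φ j ξ /
            Real.sqrt (∫ z, (φ j z) ^ 2 ∂m) ^ 2)| ∂m := by
            simpa only [Real.norm_eq_abs] using
              norm_integral_le_integral_norm (μ := m) (f := fun ξ => f ξ *
                (∑' j, Real.exp (-lam j * t) * φ j x * φ j y * φ j ξ /
                  Real.sqrt (∫ z, (φ j z) ^ 2 ∂m) ^ 2))
        _ ≤ ∫ ξ, B * (∑' j, Real.exp (-lam j * t) * φ j x * φ j y * φ j ξ /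
            Real.sqrt (∫ z, (φ j z) ^ 2 ∂m) ^ 2) ∂m := by
            refine integral_mono (hInt _ (hf.mul (hQc y))).abs (hQi.const_mul B) fun ξ => ?_
            rw [abs_mul, abs_of_nonneg (hq t ht x y ξ)]
            exact mul_le_mul_of_nonneg_right (hB ξ) (hq t ht x y ξ)
        _ = B * Real.exp (-lam 0 * t) := by rw [integral_const_mul, hQint y]
        _ ≤ B * 1 := by
            refine mul_le_mul_of_nonneg_left ?_ hB0
            exact Real.exp_le_one_iff.mpr (by nlinarith [hlam 0])
        _ = B := mul_one B
    refine ⟨hbound, ?_, ?_⟩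
    · -- main identity
      have hrw : ∀ y : E, (∫ ξ, f ξ * (∑' j, Real.exp (-lam j * t) * φ j x * φ j y * φ j ξ /
          Real.sqrt (∫ z, (φ j z) ^ 2 ∂m) ^ 2) ∂m)
          = ∑' j, Real.exp (-lam j * t) * φ j x * φ j y * (∫ ξ, f ξ * φ j ξ ∂m) /
            Real.sqrt (∫ z, (φ j z) ^ 2 ∂m) ^ 2 := hswap f hf B hB0 hB
      have hIj : ∀ j : ℕ, |∫ ξ, f ξ * φ j ξ ∂m| ≤ (B * (m Set.univ).toReal) *
          (C * Real.exp (lam j * (t / 6)) * Real.sqrt (∫ z, (φ j z) ^ 2 ∂m)) := by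
        intro j
        calc |∫ ξ, f ξ * φ j ξ ∂m| ≤ ∫ ξ, |f ξ * φ j ξ| ∂m := by
              simpa only [Real.norm_eq_abs] using
                norm_integral_le_integral_norm (μ := m) (f := fun ξ => f ξ * φ j ξ)
          _ ≤ ∫ _ξ, B * (C * Real.exp (lam j * (t / 6)) *
              Real.sqrt (∫ z, (φ j z) ^ 2 ∂m)) ∂m := by
              refine integral_mono (hInt _ (hf.mul (hφc j))).abs (integrable_const _) fun ξ => ?_
              rw [abs_mul]
              exact mul_le_mul (hB ξ) (hC j ξ) (abs_nonneg _) hB0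
          _ = (B * (m Set.univ).toReal) *
              (C * Real.exp (lam j * (t / 6)) * Real.sqrt (∫ z, (φ j z) ^ 2 ∂m)) := by
              rw [integral_const, smul_eq_mul, measureReal_def]; ring
      have hbint : ∀ j : ℕ, Integrable (fun y : E =>
          Real.exp (-lam j * t) * φ j x * φ j y * (∫ ξ, f ξ * φ j ξ ∂m) /
            Real.sqrt (∫ z, (φ j z) ^ 2 ∂m) ^ 2) m :=
        fun j => hInt _ (((continuous_const.mul (hφc j)).mul continuous_const).div_const _)
      have hbsum : Summable fun j => ∫ y,
          ‖Real.exp (-lam j * t) * φ j x * φ j y * (∫ ξ, f ξ * φ j ξ ∂m) /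
            Real.sqrt (∫ z, (φ j z) ^ 2 ∂m) ^ 2‖ ∂m := by
        refine Summable.of_nonneg_of_le (fun j => integral_nonneg fun y => norm_nonneg _)
          (fun j => ?_)
          ((husum.mul_right (C ^ 3 * M * (B * (m Set.univ).toReal))).mul_right
            (m Set.univ).toReal)
        calc (∫ y, ‖Real.exp (-lam j * t) * φ j x * φ j y * (∫ ξ, f ξ * φ j ξ ∂m) /
              Real.sqrt (∫ z, (φ j z) ^ 2 ∂m) ^ 2‖ ∂m)
            ≤ ∫ _y, Real.exp (-lam j * (t / 2)) *
              (C ^ 3 * M * (B * (m Set.univ).toReal)) ∂m := by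
              refine integral_mono (hbint j).norm (integrable_const _) fun y => ?_
              rw [Real.norm_eq_abs]
              exact hb3 j _ _ _ (B * (m Set.univ).toReal) (by positivity)
                (hC j x) (hC j y) (hIj j)
          _ = Real.exp (-lam j * (t / 2)) * (C ^ 3 * M * (B * (m Set.univ).toReal)) *
              (m Set.univ).toReal := by rw [integral_const, smul_eq_mul, measureReal_def, mul_comm]
      simp_rw [hrw]
      rw [← integral_tsum_of_summable_integral_norm hbint hbsum, tsum_eq_single 0]
      · have hx0 : φ 0 x = 1 := by rw [hone]
        have hf0 : (∫ ξ, f ξ * φ 0 ξ ∂m) = ∫ ξ, f ξ ∂m := by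
          rw [hone]; simp
        have heq : ∀ y : E, Real.exp (-lam 0 * t) * φ 0 x * φ 0 y * (∫ ξ, f ξ * φ 0 ξ ∂m) /
            Real.sqrt (∫ z, (φ 0 z) ^ 2 ∂m) ^ 2
            = Real.exp (-lam 0 * t) * (∫ ξ, f ξ ∂m) / (m Set.univ).toReal := by
          intro y
          rw [hx0, hf0, hN0sq, hone]
          ring
        simp_rw [heq]
        rw [integral_const, smul_eq_mul, measureReal_def]
        field_simp
      · intro j hj
        have heq : ∀ y : E, Real.exp (-lam j * t) * φ j x * φ j y * (∫ ξ, f ξ * φ j ξ ∂m) /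
            Real.sqrt (∫ z, (φ j z) ^ 2 ∂m) ^ 2
            = (Real.exp (-lam j * t) * φ j x * (∫ ξ, f ξ * φ j ξ ∂m) /
              Real.sqrt (∫ z, (φ j z) ^ 2 ∂m) ^ 2) * φ j y := fun y => by ring
        simp_rw [heq]
        rw [integral_const_mul, horth0 j hj, mul_zero]
    · -- continuity in y
      have hrw : ∀ y : E, (∫ ξ, f ξ * (∑' j, Real.exp (-lam j * t) * φ j x * φ j y * φ j ξ /
          Real.sqrt (∫ z, (φ j z) ^ 2 ∂m) ^ 2) ∂m)
          = ∑' j, Real.exp (-lam j * t) * φ j x * φ j y * (∫ ξ, f ξ * φ j ξ ∂m) /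
            Real.sqrt (∫ z, (φ j z) ^ 2 ∂m) ^ 2 := hswap f hf B hB0 hB
      have hIj : ∀ j : ℕ, |∫ ξ, f ξ * φ j ξ ∂m| ≤ (B * (m Set.univ).toReal) *
          (C * Real.exp (lam j * (t / 6)) * Real.sqrt (∫ z, (φ j z) ^ 2 ∂m)) := by
        intro j
        calc |∫ ξ, f ξ * φ j ξ ∂m| ≤ ∫ ξ, |f ξ * φ j ξ| ∂m := by
              simpa only [Real.norm_eq_abs] using
                norm_integral_le_integral_norm (μ := m) (f := fun ξ => f ξ * φ j ξ)
          _ ≤ ∫ _ξ, B * (C * Real.exp (lam j * (t / 6)) *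
              Real.sqrt (∫ z, (φ j z) ^ 2 ∂m)) ∂m := by
              refine integral_mono (hInt _ (hf.mul (hφc j))).abs (integrable_const _) fun ξ => ?_
              rw [abs_mul]
              exact mul_le_mul (hB ξ) (hC j ξ) (abs_nonneg _) hB0
          _ = (B * (m Set.univ).toReal) *
              (C * Real.exp (lam j * (t / 6)) * Real.sqrt (∫ z, (φ j z) ^ 2 ∂m)) := by
              rw [integral_const, smul_eq_mul, measureReal_def]; ring
      rw [show (fun y : E => ∫ ξ, f ξ * (∑' j, Real.exp (-lam j * t) * φ j x * φ j y * φ j ξ /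
          Real.sqrt (∫ z, (φ j z) ^ 2 ∂m) ^ 2) ∂m)
          = fun y : E => ∑' j, Real.exp (-lam j * t) * φ j x * φ j y * (∫ ξ, f ξ * φ j ξ ∂m) /
            Real.sqrt (∫ z, (φ j z) ^ 2 ∂m) ^ 2 from funext hrw]
      refine continuous_tsum
        (fun j => (((continuous_const.mul (hφc j)).mul continuous_const).div_const _))
        (husum.mul_right (C ^ 3 * M * (B * (m Set.univ).toReal))) (fun j y => ?_)
      rw [Real.norm_eq_abs]
      exact hb3 j _ _ _ (B * (m Set.univ).toReal) (by positivity) (hC j x) (hC j y) (hIj j)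
  -- now take the limit t → 0+
  have hlim1 : Tendsto (fun t : ℝ => ∫ y, (∫ ξ, f ξ *
      (∑' j, Real.exp (-lam j * t) * φ j x * φ j y * φ j ξ /
        Real.sqrt (∫ z, (φ j z) ^ 2 ∂m) ^ 2) ∂m) ∂m)
      (nhdsWithin 0 (Set.Ioi 0)) (nhds (∫ y, (∫ ξ, f ξ ∂(ν x y)) ∂m)) := by
    refine tendsto_integral_filter_of_dominated_convergence (fun _ => B) ?_ ?_
      (integrable_const B) ?_
    · exact Filter.eventually_of_mem self_mem_nhdsWithin fun t ht =>
        ((main t ht).2.2).aestronglyMeasurable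
    · refine Filter.eventually_of_mem self_mem_nhdsWithin fun t ht => ?_
      exact Filter.Eventually.of_forall fun y => by
        rw [Real.norm_eq_abs]; exact (main t ht).1 y
    · exact Filter.Eventually.of_forall fun y => hνlim x y f hf
  have hlim2 : Tendsto (fun t : ℝ => ∫ y, (∫ ξ, f ξ *
      (∑' j, Real.exp (-lam j * t) * φ j x * φ j y * φ j ξ /
        Real.sqrt (∫ z, (φ j z) ^ 2 ∂m) ^ 2) ∂m) ∂m)
      (nhdsWithin 0 (Set.Ioi 0)) (nhds (∫ ξ, f ξ ∂m)) := by
    have h2 : Tendsto (fun t : ℝ => Real.exp (-lam 0 * t) * ∫ ξ, f ξ ∂m)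
        (nhdsWithin 0 (Set.Ioi 0)) (nhds (∫ ξ, f ξ ∂m)) := by
      have h3 : Tendsto (fun t : ℝ => Real.exp (-lam 0 * t) * ∫ ξ, f ξ ∂m)
          (nhds 0) (nhds (Real.exp (-lam 0 * 0) * ∫ ξ, f ξ ∂m)) :=
        (((Real.continuous_exp.comp (continuous_const.mul continuous_id)).mul
          continuous_const).tendsto 0)
      simpa using h3.mono_left nhdsWithin_le_nhds
    exact h2.congr' (Filter.eventually_of_mem self_mem_nhdsWithin fun t ht =>
      ((main t ht).2.1).symm)
  exact tendsto_nhds_unique hlim1 hlim2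
end

section
/- Let 1 ≤ p ≤ ∞, let μ be a finite positive Borel measure on E and f ∈ L^p(E,m). Then the function (T^μ f)(x) := ∫_E ∫_E f(ξ) k(x,y)(dξ) μ(dy) is well defined for m-almost every x (and, up to m-null sets, does not depend on the choice of representative of f), is measurable, and satisfies ‖T^μ f‖_{L^p(E,m)} ≤ μ(E)·‖f‖_{L^p(E,m)}. -/
open MeasureTheory ENNReal

private lemma jensen_rpow_lintegral {α : Type*} [MeasurableSpace α] (ν : Measure α)
    [IsFiniteMeasure ν] {h : α → ℝ≥0∞} (hh : AEMeasurable h ν) {r : ℝ} (hr : 1 ≤ r) :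
    (∫⁻ a, h a ∂ν) ^ r ≤ ν Set.univ ^ (r - 1) * ∫⁻ a, h a ^ r ∂ν := by
  rcases eq_or_lt_of_le hr with h1 | h1
  · simp [← h1]
  · have hr0 : (0:ℝ) < r := lt_trans zero_lt_one h1
    have hpq := Real.HolderConjugate.conjExponent h1
    set q := Real.conjExponent r with hq
    have hhold := ENNReal.lintegral_mul_le_Lp_mul_Lq ν hpq hh
      (aemeasurable_const (b := (1:ℝ≥0∞)))
    simp only [Pi.mul_apply, mul_one, ENNReal.one_rpow, lintegral_one] at hhold
    have h2 := ENNReal.rpow_le_rpow hhold hr0.le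
    rw [ENNReal.mul_rpow_of_nonneg _ _ hr0.le, ← ENNReal.rpow_mul, ← ENNReal.rpow_mul,
      one_div, inv_mul_cancel₀ hr0.ne', ENNReal.rpow_one, one_div, inv_mul_eq_div,
      hpq.div_conj_eq_sub_one] at h2
    exact h2.trans_eq (mul_comm _ _)

theorem stmt_13 {E : Type*} [MetricSpace E] [CompactSpace E] [MeasurableSpace E] [BorelSpace E]
    (m : Measure E) [IsFiniteMeasure m]
    (k : E → E → Measure E) (hkprob : ∀ x y, IsProbabilityMeasure (k x y))
    (hkmeas : Measurable (fun p : E × E => k p.1 p.2))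
    (hksymm : ∀ x y, k x y = k y x)
    (hkinv : ∀ (x : E) (B : Set E), MeasurableSet B → ∫⁻ y, k x y B ∂m = m B)
    (p : ℝ≥0∞) (hp : 1 ≤ p)
    (μ : Measure E) [IsFiniteMeasure μ]
    (f : E → ℝ) (hf : MemLp f p m) :
    (∀ᵐ x ∂m, Integrable (fun y => ∫ ξ, f ξ ∂(k x y)) μ) ∧
    AEStronglyMeasurable (fun x => ∫ y, (∫ ξ, f ξ ∂(k x y)) ∂μ) m ∧
    (∀ f' : E → ℝ, f =ᵐ[m] f' →
      (fun x => ∫ y, (∫ ξ, f ξ ∂(k x y)) ∂μ) =ᵐ[m]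
        (fun x => ∫ y, (∫ ξ, f' ξ ∂(k x y)) ∂μ)) ∧
    eLpNorm (fun x => ∫ y, (∫ ξ, f ξ ∂(k x y)) ∂μ) p m ≤ μ Set.univ * eLpNorm f p m := by
  classical
  obtain ⟨f₀, hf₀sm, hff₀⟩ : ∃ f₀, StronglyMeasurable f₀ ∧ f =ᵐ[m] f₀ :=
    ⟨hf.1.mk f, hf.1.stronglyMeasurable_mk, hf.1.ae_eq_mk⟩
  have hfint : Integrable f m := hf.integrable hp
  have hf₀int : Integrable f₀ m := hfint.congr hff₀
  have hg₀ : Measurable fun ξ => (‖f₀ ξ‖₊ : ℝ≥0∞) := hf₀sm.measurable.enorm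
  -- measurability of kernel lintegrals
  have hmeasK : ∀ {g : E → ℝ≥0∞}, Measurable g →
      Measurable (fun q : E × E => ∫⁻ ξ, g ξ ∂(k q.1 q.2)) := fun hg =>
    (Measure.measurable_lintegral hg).comp hkmeas
  -- invariance for lintegrals
  have hinv : ∀ {g : E → ℝ≥0∞}, Measurable g → ∀ y,
      ∫⁻ x, ∫⁻ ξ, g ξ ∂(k x y) ∂m = ∫⁻ ξ, g ξ ∂m := by
    intro g hg y
    have hky : Measurable (fun x => k y x) := hkmeas.comp measurable_prodMk_left
    have hbind : m.bind (fun x => k y x) = m := by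
      ext B hB
      rw [Measure.bind_apply hB hky.aemeasurable]
      exact hkinv y B hB
    calc ∫⁻ x, ∫⁻ ξ, g ξ ∂(k x y) ∂m = ∫⁻ x, ∫⁻ ξ, g ξ ∂(k y x) ∂m :=
          lintegral_congr fun x => by rw [hksymm]
      _ = ∫⁻ ξ, g ξ ∂(m.bind fun x => k y x) := (Measure.lintegral_bind hky.aemeasurable hg.aemeasurable).symm
      _ = ∫⁻ ξ, g ξ ∂m := by rw [hbind]
  -- Tonelli + invariance
  have hton : ∀ {g : E → ℝ≥0∞}, Measurable g →
      ∫⁻ x, ∫⁻ y, ∫⁻ ξ, g ξ ∂(k x y) ∂μ ∂m = μ Set.univ * ∫⁻ ξ, g ξ ∂m := by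
    intro g hg
    rw [lintegral_lintegral_swap (hmeasK hg).aemeasurable]
    calc ∫⁻ y, ∫⁻ x, ∫⁻ ξ, g ξ ∂(k x y) ∂m ∂μ = ∫⁻ y, (∫⁻ ξ, g ξ ∂m) ∂μ :=
          lintegral_congr fun y => hinv hg y
      _ = μ Set.univ * ∫⁻ ξ, g ξ ∂m := by rw [lintegral_const, mul_comm]
  -- null sets are a.e. null for the kernels
  have hnull : ∀ {N : Set E}, MeasurableSet N → m N = 0 →
      ∀ᵐ x ∂m, ∀ᵐ y ∂μ, k x y N = 0 := by
    intro N hN hN0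
    have hφ : Measurable fun q : E × E => k q.1 q.2 N :=
      (Measure.measurable_coe hN).comp hkmeas
    have hz : ∫⁻ x, ∫⁻ y, k x y N ∂μ ∂m = 0 := by
      have h2 := hton (measurable_one.indicator hN)
      simp only [lintegral_indicator_one hN] at h2
      rw [h2, hN0, mul_zero]
    have h3 := (lintegral_eq_zero_iff hφ.lintegral_prod_right').mp hz
    filter_upwards [h3] with x hx
    have h4 := (lintegral_eq_zero_iff (hφ.comp measurable_prodMk_left)).mp hx
    filter_upwards [h4] with y hy using hy
  -- a.e. equality of kernel integrals
  have hcongr : ∀ g g' : E → ℝ, g =ᵐ[m] g' →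
      ∀ᵐ x ∂m, ∀ᵐ y ∂μ, ∫ ξ, g ξ ∂(k x y) = ∫ ξ, g' ξ ∂(k x y) := by
    intro g g' hgg'
    set N := toMeasurable m {a | g a ≠ g' a} with hNdef
    have hNm : MeasurableSet N := measurableSet_toMeasurable m _
    have hN0 : m N = 0 := by
      rw [hNdef, measure_toMeasurable]
      exact hgg'
    filter_upwards [hnull hNm hN0] with x hx
    filter_upwards [hx] with y hy
    exact integral_congr_ae (ae_iff.2 (measure_mono_null (subset_toMeasurable m _) hy))
  -- strong measurability of the kernel integral of f₀
  let κ : ProbabilityTheory.Kernel (E × E) E := ⟨fun q => k q.1 q.2, hkmeas⟩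
  haveI : ProbabilityTheory.IsMarkovKernel κ := ⟨fun q => hkprob q.1 q.2⟩
  have hH₀ : StronglyMeasurable fun q : E × E => ∫ ξ, f₀ ξ ∂(k q.1 q.2) :=
    MeasureTheory.StronglyMeasurable.integral_kernel_prod_right (κ := κ)
      (f := fun _ ξ => f₀ ξ) (hf₀sm.comp_measurable measurable_snd)
  have hFF₀ := hcongr f f₀ hff₀
  have hFeq : (fun x => ∫ y, (∫ ξ, f ξ ∂(k x y)) ∂μ) =ᵐ[m]
      (fun x => ∫ y, (∫ ξ, f₀ ξ ∂(k x y)) ∂μ) :=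
    hFF₀.mono fun x hx => integral_congr_ae hx
  have hF₀sm : StronglyMeasurable fun x => ∫ y, (∫ ξ, f₀ ξ ∂(k x y)) ∂μ :=
    hH₀.integral_prod_right'
  have part2 : AEStronglyMeasurable (fun x => ∫ y, (∫ ξ, f ξ ∂(k x y)) ∂μ) m :=
    hF₀sm.aestronglyMeasurable.congr hFeq.symm
  -- part 1
  have hSmeas : Measurable fun x => ∫⁻ y, ∫⁻ ξ, ‖f₀ ξ‖₊ ∂(k x y) ∂μ :=
    (hmeasK hg₀).lintegral_prod_right'
  have hSfin : ∀ᵐ x ∂m, ∫⁻ y, ∫⁻ ξ, ‖f₀ ξ‖₊ ∂(k x y) ∂μ < ∞ := by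
    refine ae_lt_top hSmeas ?_
    rw [hton hg₀]
    exact ENNReal.mul_ne_top (measure_ne_top μ _) hf₀int.2.ne
  have part1 : ∀ᵐ x ∂m, Integrable (fun y => ∫ ξ, f ξ ∂(k x y)) μ := by
    filter_upwards [hFF₀, hSfin] with x hx hfin
    constructor
    · exact ((hH₀.comp_measurable measurable_prodMk_left).aestronglyMeasurable).congr (hx.mono fun y hy => hy.symm)
    · calc ∫⁻ y, ‖∫ ξ, f ξ ∂(k x y)‖₊ ∂μ
          = ∫⁻ y, ‖∫ ξ, f₀ ξ ∂(k x y)‖₊ ∂μ :=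
            lintegral_congr_ae (hx.mono fun y hy => by dsimp only; rw [hy])
        _ ≤ ∫⁻ y, ∫⁻ ξ, ‖f₀ ξ‖₊ ∂(k x y) ∂μ :=
            lintegral_mono fun y => enorm_integral_le_lintegral_enorm _
        _ < ∞ := hfin
  -- part 3
  have part3 : ∀ f' : E → ℝ, f =ᵐ[m] f' →
      (fun x => ∫ y, (∫ ξ, f ξ ∂(k x y)) ∂μ) =ᵐ[m]
        (fun x => ∫ y, (∫ ξ, f' ξ ∂(k x y)) ∂μ) :=
    fun f' hff' => (hcongr f f' hff').mono fun x hx => integral_congr_ae hx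
  refine ⟨part1, part2, part3, ?_⟩
  rw [eLpNorm_congr_ae hFeq, eLpNorm_congr_ae hff₀]
  by_cases hmu0 : μ = 0
  · subst hmu0
    simp [integral_zero_measure]
  by_cases hptop : p = ∞
  · subst hptop
    rw [eLpNorm_exponent_top, eLpNorm_exponent_top]
    by_cases hCtop : eLpNormEssSup f₀ m = ∞
    · rw [hCtop, ENNReal.mul_top (Measure.measure_univ_ne_zero.mpr hmu0)]
      exact le_top
    · set C := eLpNormEssSup f₀ m with hC
      have hbd : ∀ᵐ ξ ∂m, (‖f₀ ξ‖₊ : ℝ≥0∞) ≤ C := ae_le_eLpNormEssSup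
      set N := {ξ | C < (‖f₀ ξ‖₊ : ℝ≥0∞)} with hN
      have hNm : MeasurableSet N := measurableSet_lt measurable_const hg₀
      have hN0 : m N = 0 := by
        have := ae_iff.mp hbd
        simpa [hN, not_le] using this
      have key : ∀ᵐ x ∂m, (‖∫ y, (∫ ξ, f₀ ξ ∂(k x y)) ∂μ‖₊ : ℝ≥0∞) ≤ μ Set.univ * C := by
        filter_upwards [hnull hNm hN0] with x hx
        have hx2 : ∀ᵐ y ∂μ, ∫⁻ ξ, (‖f₀ ξ‖₊ : ℝ≥0∞) ∂(k x y) ≤ C := by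
          filter_upwards [hx] with y hy
          have hae : ∀ᵐ ξ ∂(k x y), (‖f₀ ξ‖₊ : ℝ≥0∞) ≤ C := by
            rw [ae_iff]
            simpa [hN, not_le] using hy
          calc ∫⁻ ξ, (‖f₀ ξ‖₊ : ℝ≥0∞) ∂(k x y) ≤ ∫⁻ _, C ∂(k x y) := lintegral_mono_ae hae
            _ = C := by
                haveI := hkprob x y
                simp
        calc (‖∫ y, (∫ ξ, f₀ ξ ∂(k x y)) ∂μ‖₊ : ℝ≥0∞)
            ≤ ∫⁻ y, ‖∫ ξ, f₀ ξ ∂(k x y)‖₊ ∂μ := enorm_integral_le_lintegral_enorm _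
          _ ≤ ∫⁻ y, ∫⁻ ξ, ‖f₀ ξ‖₊ ∂(k x y) ∂μ :=
              lintegral_mono fun y => enorm_integral_le_lintegral_enorm _
          _ ≤ ∫⁻ _, C ∂μ := lintegral_mono_ae hx2
          _ = μ Set.univ * C := by rw [lintegral_const, mul_comm]
      exact essSup_le_of_ae_le _ key
  · have hp0 : p ≠ 0 := (lt_of_lt_of_le zero_lt_one hp).ne'
    set r := p.toReal with hrdef
    have hr1 : 1 ≤ r := by
      rw [hrdef, ← ENNReal.toReal_one]
      exact ENNReal.toReal_mono hptop hp
    have hr0 : (0:ℝ) < r := lt_of_lt_of_le zero_lt_one hr1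
    rw [eLpNorm_eq_lintegral_rpow_enorm_toReal hp0 hptop, eLpNorm_eq_lintegral_rpow_enorm_toReal hp0 hptop]
    have hjen : ∀ x y, (∫⁻ ξ, (‖f₀ ξ‖₊ : ℝ≥0∞) ∂(k x y)) ^ r
        ≤ ∫⁻ ξ, (‖f₀ ξ‖₊ : ℝ≥0∞) ^ r ∂(k x y) := by
      intro x y
      haveI := hkprob x y
      simpa using jensen_rpow_lintegral (k x y) hg₀.aemeasurable hr1
    have hmono : ∀ x, ((‖∫ y, (∫ ξ, f₀ ξ ∂(k x y)) ∂μ‖₊ : ℝ≥0∞)) ^ r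
        ≤ (∫⁻ y, ∫⁻ ξ, ‖f₀ ξ‖₊ ∂(k x y) ∂μ) ^ r := fun x =>
      ENNReal.rpow_le_rpow ((enorm_integral_le_lintegral_enorm _).trans
        (lintegral_mono fun y => enorm_integral_le_lintegral_enorm _)) hr0.le
    have hsplit : μ Set.univ ^ r = μ Set.univ ^ (r - 1) * μ Set.univ := by
      nth_rewrite 1 [show r = (r - 1) + 1 by ring]
      rw [ENNReal.rpow_add_of_nonneg _ _ (by linarith) zero_le_one, ENNReal.rpow_one]
    have key : ∫⁻ x, (‖∫ y, (∫ ξ, f₀ ξ ∂(k x y)) ∂μ‖₊ : ℝ≥0∞) ^ r ∂m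
        ≤ μ Set.univ ^ r * ∫⁻ ξ, (‖f₀ ξ‖₊ : ℝ≥0∞) ^ r ∂m := by
      calc ∫⁻ x, (‖∫ y, (∫ ξ, f₀ ξ ∂(k x y)) ∂μ‖₊ : ℝ≥0∞) ^ r ∂m
          ≤ ∫⁻ x, (∫⁻ y, ∫⁻ ξ, ‖f₀ ξ‖₊ ∂(k x y) ∂μ) ^ r ∂m := lintegral_mono hmono
        _ ≤ ∫⁻ x, μ Set.univ ^ (r - 1) * ∫⁻ y, (∫⁻ ξ, ‖f₀ ξ‖₊ ∂(k x y)) ^ r ∂μ ∂m :=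
            lintegral_mono fun x => jensen_rpow_lintegral μ
              ((hmeasK hg₀).comp measurable_prodMk_left).aemeasurable hr1
        _ ≤ ∫⁻ x, μ Set.univ ^ (r - 1) * ∫⁻ y, ∫⁻ ξ, (‖f₀ ξ‖₊ : ℝ≥0∞) ^ r ∂(k x y) ∂μ ∂m :=
            lintegral_mono fun x => mul_le_mul_right (lintegral_mono fun y => hjen x y) _
        _ = μ Set.univ ^ (r - 1) * (μ Set.univ * ∫⁻ ξ, (‖f₀ ξ‖₊ : ℝ≥0∞) ^ r ∂m) := by
            rw [lintegral_const_mul _ (hmeasK (hg₀.pow_const r)).lintegral_prod_right',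
              hton (hg₀.pow_const r)]
        _ = μ Set.univ ^ r * ∫⁻ ξ, (‖f₀ ξ‖₊ : ℝ≥0∞) ^ r ∂m := by
            rw [hsplit, mul_assoc]
    calc (∫⁻ x, (‖∫ y, (∫ ξ, f₀ ξ ∂(k x y)) ∂μ‖₊ : ℝ≥0∞) ^ r ∂m) ^ (1 / r)
        ≤ (μ Set.univ ^ r * ∫⁻ ξ, (‖f₀ ξ‖₊ : ℝ≥0∞) ^ r ∂m) ^ (1 / r) :=
          ENNReal.rpow_le_rpow key (by positivity)
      _ = μ Set.univ * (∫⁻ ξ, (‖f₀ ξ‖₊ : ℝ≥0∞) ^ r ∂m) ^ (1 / r) := by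
          rw [ENNReal.mul_rpow_of_nonneg _ _ (by positivity), ← ENNReal.rpow_mul,
            mul_one_div, div_self hr0.ne', ENNReal.rpow_one]
end

section
/- Let p₁, p₂ ∈ [1,∞] with 1/p₁ + 1/p₂ ≥ 1 and define r ∈ [1,∞] by 1/r = 1/p₁ + 1/p₂ − 1. For f ∈ L^{p₁}(E,m) and h ∈ L^{p₂}(E,m), the generalized convolution (f ⋄ h)(x) := ∫_E (T^y f)(x) h(y) m(dy) is well defined for m-almost every x, and f ⋄ h ∈ L^r(E,m) with ‖f ⋄ h‖_{L^r(E,m)} ≤ ‖f‖_{L^{p₁}(E,m)} · ‖h‖_{L^{p₂}(E,m)}. -/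
open MeasureTheory ENNReal ProbabilityTheory

private lemma jensen_aux {E : Type*} [MeasurableSpace E] (μ : Measure E)
    [IsProbabilityMeasure μ]
    {φ : E → ℝ≥0∞} (hφ : AEMeasurable φ μ) {P : ℝ} (hP : 1 ≤ P) :
    (∫⁻ ξ, φ ξ ∂μ) ^ P ≤ ∫⁻ ξ, φ ξ ^ P ∂μ := by
  have hP0 : (0:ℝ) < P := lt_of_lt_of_le one_pos hP
  have h1P : 1/P ≤ 1 := by rw [div_le_one hP0]; exact hP
  have key := ENNReal.lintegral_mul_norm_pow_le (μ := μ) (f := fun ξ => φ ξ ^ P)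
    (g := fun _ => (1:ℝ≥0∞)) (hφ.pow_const P) aemeasurable_const
    (by positivity : (0:ℝ) ≤ 1/P) (by linarith : (0:ℝ) ≤ 1 - 1/P) (by ring)
  simp only [ENNReal.one_rpow, mul_one, lintegral_one, measure_univ] at key
  have key2 : ∫⁻ ξ, φ ξ ∂μ ≤ (∫⁻ ξ, φ ξ ^ P ∂μ) ^ (1/P) := by
    refine le_trans (le_of_eq ?_) key
    refine lintegral_congr fun ξ => ?_
    rw [← ENNReal.rpow_mul, mul_one_div_cancel hP0.ne', ENNReal.rpow_one]
  calc (∫⁻ ξ, φ ξ ∂μ) ^ P ≤ ((∫⁻ ξ, φ ξ ^ P ∂μ) ^ (1/P)) ^ P :=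
        ENNReal.rpow_le_rpow key2 hP0.le
    _ = ∫⁻ ξ, φ ξ ^ P ∂μ := by
        rw [← ENNReal.rpow_mul, one_div_mul_cancel hP0.ne', ENNReal.rpow_one]

theorem stmt_14 {E : Type*} [MetricSpace E] [CompactSpace E] [MeasurableSpace E] [BorelSpace E]
    (m : Measure E) [IsFiniteMeasure m]
    (k : E → E → Measure E) (hkprob : ∀ x y, IsProbabilityMeasure (k x y))
    (hkmeas : Measurable (fun p : E × E => k p.1 p.2))
    (hksymm : ∀ x y, k x y = k y x)
    (hkinv : ∀ (x : E) (B : Set E), MeasurableSet B → ∫⁻ y, k x y B ∂m = m B)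
    (p₁ p₂ r : ℝ≥0∞) (hp₁ : 1 ≤ p₁) (hp₂ : 1 ≤ p₂)
    (hpsum : 1 ≤ 1 / p₁ + 1 / p₂)
    (hr : 1 / r + 1 = 1 / p₁ + 1 / p₂)
    (f h : E → ℝ) (hf : MemLp f p₁ m) (hh : MemLp h p₂ m) :
    (∀ᵐ x ∂m, Integrable (fun y => (∫ ξ, f ξ ∂(k x y)) * h y) m) ∧
    eLpNorm (fun x => ∫ y, (∫ ξ, f ξ ∂(k x y)) * h y ∂m) r m
      ≤ eLpNorm f p₁ m * eLpNorm h p₂ m := by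
  classical
  obtain ⟨f', hf'sm, hff'⟩ : ∃ f', StronglyMeasurable f' ∧ f =ᵐ[m] f' :=
    ⟨hf.1.mk f, hf.1.stronglyMeasurable_mk, hf.1.ae_eq_mk⟩
  obtain ⟨h', hh'sm, hhh'⟩ : ∃ h', StronglyMeasurable h' ∧ h =ᵐ[m] h' :=
    ⟨hh.1.mk h, hh.1.stronglyMeasurable_mk, hh.1.ae_eq_mk⟩
  have hf'meas : Measurable f' := hf'sm.measurable
  have hh'meas : Measurable h' := hh'sm.measurable
  have hkx : ∀ x : E, Measurable (fun y => k x y) := fun x =>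
    hkmeas.comp measurable_prodMk_left
  -- invariance for lintegrals
  have hbind : ∀ (x : E) (φ : E → ℝ≥0∞), Measurable φ →
      ∫⁻ y, ∫⁻ ξ, φ ξ ∂(k x y) ∂m = ∫⁻ ξ, φ ξ ∂m := by
    intro x φ hφ
    have hb : m.bind (fun y => k x y) = m := by
      ext B hB
      rw [Measure.bind_apply hB (hkx x).aemeasurable]
      exact hkinv x B hB
    rw [← Measure.lintegral_bind (hkx x).aemeasurable hφ.aemeasurable, hb]
  have hbind' : ∀ (y : E) (φ : E → ℝ≥0∞), Measurable φ →
      ∫⁻ x, ∫⁻ ξ, φ ξ ∂(k x y) ∂m = ∫⁻ ξ, φ ξ ∂m := by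
    intro y φ hφ
    calc ∫⁻ x, ∫⁻ ξ, φ ξ ∂(k x y) ∂m = ∫⁻ x, ∫⁻ ξ, φ ξ ∂(k y x) ∂m := by
          refine lintegral_congr fun x => by rw [hksymm x y]
      _ = ∫⁻ ξ, φ ξ ∂m := hbind y φ hφ
  -- null sets propagate through the kernels
  have hnull : ∀ (x : E) (N : Set E), MeasurableSet N → m N = 0 → ∀ᵐ y ∂m, k x y N = 0 := by
    intro x N hN hN0
    have hmeas : Measurable fun y => k x y N := (Measure.measurable_coe hN).comp (hkx x)
    have h0 : ∫⁻ y, k x y N ∂m = 0 := by rw [hkinv x N hN, hN0]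
    exact (lintegral_eq_zero_iff hmeas).mp h0
  -- replace f, h by measurable representatives
  have hfeq : ∀ x : E, (fun y => (∫ ξ, f ξ ∂(k x y)) * h y) =ᵐ[m]
      (fun y => (∫ ξ, f' ξ ∂(k x y)) * h' y) := by
    intro x
    have h0 : m {a | ¬ f a = f' a} = 0 := ae_iff.mp hff'
    obtain ⟨N, hNsub, hNmeas, hN0⟩ := exists_measurable_superset_of_null h0
    filter_upwards [hnull x N hNmeas hN0, hhh'] with y hy hy2
    have hae : f =ᵐ[k x y] f' := ae_iff.mpr (measure_mono_null hNsub hy)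
    rw [integral_congr_ae hae, hy2]
  have hconv : (fun x => ∫ y, (∫ ξ, f ξ ∂(k x y)) * h y ∂m)
      = fun x => ∫ y, (∫ ξ, f' ξ ∂(k x y)) * h' y ∂m :=
    funext fun x => integral_congr_ae (hfeq x)
  -- main objects
  set F : E → E → ℝ≥0∞ := fun x y => ∫⁻ ξ, (‖f' ξ‖₊ : ℝ≥0∞) ∂(k x y) with hFdef
  set H : E → ℝ≥0∞ := fun y => (‖h' y‖₊ : ℝ≥0∞) with hHdef
  set C : E → ℝ≥0∞ := fun x => ∫⁻ y, F x y * H y ∂m with hCdef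
  have hHmeas : Measurable H := hh'meas.enorm
  have hFmeas : Measurable fun p : E × E => F p.1 p.2 := by
    let κ : Kernel (E × E) E := ⟨fun p => k p.1 p.2, hkmeas⟩
    haveI : IsMarkovKernel κ := ⟨fun p => hkprob p.1 p.2⟩
    exact Measurable.lintegral_kernel_prod_right' (κ := κ)
      (hf'meas.enorm.comp measurable_snd)
  have hFxmeas : ∀ x, Measurable fun y => F x y := fun x =>
    hFmeas.comp measurable_prodMk_left
  have hCmeas : Measurable C :=
    Measurable.lintegral_prod_right' (hFmeas.mul (hHmeas.comp measurable_snd))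
  have hint_meas : ∀ x, StronglyMeasurable fun y => ∫ ξ, f' ξ ∂(k x y) := by
    intro x
    let κx : Kernel E E := ⟨fun y => k x y, hkx x⟩
    haveI : IsMarkovKernel κx := ⟨fun y => hkprob x y⟩
    exact StronglyMeasurable.integral_kernel_prod_right' (κ := κx)
      (hf'sm.comp_measurable measurable_snd)
  have hCinner : ∀ x, ∫⁻ y, (‖(∫ ξ, f' ξ ∂(k x y)) * h' y‖₊ : ℝ≥0∞) ∂m ≤ C x := by
    intro x
    refine lintegral_mono fun y => ?_
    rw [nnnorm_mul, ENNReal.coe_mul]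
    exact mul_le_mul' (enorm_integral_le_lintegral_enorm _) le_rfl
  have hCbound : ∀ x, (‖∫ y, (∫ ξ, f' ξ ∂(k x y)) * h' y ∂m‖₊ : ℝ≥0∞) ≤ C x := fun x =>
    le_trans (enorm_integral_le_lintegral_enorm _) (hCinner x)
  -- exponent basics
  have hip1 : 1 / p₁ ≤ 1 := by rw [one_div]; exact ENNReal.inv_le_one.mpr hp₁
  have hip2 : 1 / p₂ ≤ 1 := by rw [one_div]; exact ENNReal.inv_le_one.mpr hp₂
  have hir : 1 / r ≤ 1 := by
    have h2 : 1 / r + 1 ≤ 1 + 1 := by rw [hr]; exact add_le_add hip1 hip2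
    exact (ENNReal.add_le_add_iff_right ENNReal.one_ne_top).mp h2
  have hr1 : 1 ≤ r := by
    rw [one_div] at hir; exact ENNReal.inv_le_one.mp hir
  have hr0 : r ≠ 0 := (zero_lt_one.trans_le hr1).ne'
  have hp10 : p₁ ≠ 0 := (zero_lt_one.trans_le hp₁).ne'
  have hp20 : p₂ ≠ 0 := (zero_lt_one.trans_le hp₂).ne'
  -- reduce to measurable representatives
  suffices hkey : (∀ᵐ x ∂m, C x < ⊤) ∧
      eLpNorm (fun x => ∫ y, (∫ ξ, f' ξ ∂(k x y)) * h' y ∂m) r m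
        ≤ eLpNorm f' p₁ m * eLpNorm h' p₂ m by
    obtain ⟨key1, key2⟩ := hkey
    constructor
    · filter_upwards [key1] with x hx
      refine Integrable.congr ⟨((hint_meas x).mul hh'sm).aestronglyMeasurable, ?_⟩ (hfeq x).symm
      exact lt_of_le_of_lt (hCinner x) hx
    · rw [hconv, eLpNorm_congr_ae hff', eLpNorm_congr_ae hhh']
      exact key2
  by_cases hrtop : r = ∞
  · -- case r = ∞
    subst hrtop
    have hc : 1 / p₁ + 1 / p₂ = 1 := by
      rw [← hr]; simp
    have key : ∀ x, C x ≤ eLpNorm f' p₁ m * eLpNorm h' p₂ m := by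
      rcases eq_or_ne p₁ ∞ with hp1t | hp1t
      · -- p₁ = ∞, p₂ = 1
        subst hp1t
        have hp2one : p₂ = 1 := by
          have h1 : 1 / p₂ = 1 := by simpa using hc
          rwa [one_div, ENNReal.inv_eq_one] at h1
        subst hp2one
        intro x
        set t := eLpNormEssSup f' m with ht
        set S : Set E := {ξ | t < (‖f' ξ‖₊ : ℝ≥0∞)} with hS
        have hSmeas : MeasurableSet S := measurableSet_lt measurable_const hf'meas.enorm
        have hS0 : m S = 0 := by
          have h1 := ae_iff.mp (ae_le_eLpNormEssSup (f := f') (μ := m))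
          simpa [hS, not_le, enorm_eq_nnnorm] using h1
        have hFt : ∀ᵐ y ∂m, F x y ≤ t := by
          filter_upwards [hnull x S hSmeas hS0] with y hy
          have hb : ∀ᵐ ξ ∂(k x y), (‖f' ξ‖₊ : ℝ≥0∞) ≤ t :=
            ae_iff.mpr (by simpa [hS, not_le] using hy)
          calc F x y ≤ ∫⁻ _, t ∂(k x y) := lintegral_mono_ae hb
            _ = t := by haveI := hkprob x y; simp
        calc C x ≤ ∫⁻ y, t * H y ∂m :=
              lintegral_mono_ae (hFt.mono fun y hy => mul_le_mul' hy le_rfl)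
          _ = t * ∫⁻ y, H y ∂m := lintegral_const_mul t hHmeas
          _ = eLpNorm f' ⊤ m * eLpNorm h' 1 m := by
              rw [eLpNorm_exponent_top, eLpNorm_one_eq_lintegral_enorm]; rfl
      · rcases eq_or_ne p₂ ∞ with hp2t | hp2t
        · subst hp2t
          have hp1one : p₁ = 1 := by
            have h1 : 1 / p₁ = 1 := by simpa using hc
            rwa [one_div, ENNReal.inv_eq_one] at h1
          subst hp1one
          intro x
          set s := eLpNormEssSup h' m with hs
          have hHs : ∀ᵐ y ∂m, H y ≤ s := ae_le_eLpNormEssSup (f := h') (μ := m)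
          calc C x ≤ ∫⁻ y, F x y * s ∂m :=
                lintegral_mono_ae (hHs.mono fun y hy => mul_le_mul' le_rfl hy)
            _ = (∫⁻ y, F x y ∂m) * s := lintegral_mul_const s (hFxmeas x)
            _ = eLpNorm f' 1 m * eLpNorm h' ⊤ m := by
                rw [hbind x (fun ξ => (‖f' ξ‖₊ : ℝ≥0∞)) hf'meas.enorm, eLpNorm_exponent_top,
                  eLpNorm_one_eq_lintegral_enorm]; rfl
        · -- both finite, conjugate exponents
          have hp1ne1 : p₁ ≠ 1 := by
            intro h1
            rw [h1] at hc
            have h2 : (1:ℝ≥0∞) + 1 / p₂ = 1 + 0 := by simpa using hc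
            have h3 := (ENNReal.add_right_inj ENNReal.one_ne_top).mp h2
            rw [one_div, ENNReal.inv_eq_zero] at h3
            exact hp2t h3
          have hP1 : 1 < p₁.toReal := by
            rw [← ENNReal.toReal_one]
            exact (ENNReal.toReal_lt_toReal ENNReal.one_ne_top hp1t).mpr
              (lt_of_le_of_ne hp₁ (Ne.symm hp1ne1))
          have hsum : p₁.toReal⁻¹ + p₂.toReal⁻¹ = 1 := by
            have h1 : (1/p₁).toReal + (1/p₂).toReal = 1 := by
              rw [← ENNReal.toReal_add (hip1.trans_lt ENNReal.one_lt_top).ne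
                (hip2.trans_lt ENNReal.one_lt_top).ne, hc, ENNReal.toReal_one]
            simpa [ENNReal.toReal_div, one_div] using h1
          have hPQ : p₁.toReal.HolderConjugate p₂.toReal := Real.holderConjugate_iff.mpr ⟨hP1, hsum⟩
          intro x
          have holder := ENNReal.lintegral_mul_le_Lp_mul_Lq m hPQ
            (hFxmeas x).aemeasurable hHmeas.aemeasurable
          simp only [Pi.mul_apply] at holder
          have hJ : ∫⁻ y, F x y ^ p₁.toReal ∂m
              ≤ ∫⁻ ξ, (‖f' ξ‖₊ : ℝ≥0∞) ^ p₁.toReal ∂m := by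
            refine le_trans (lintegral_mono fun y => ?_)
              (le_of_eq (hbind x _ (hf'meas.enorm.pow_const _)))
            haveI := hkprob x y
            exact jensen_aux (k x y) hf'meas.enorm.aemeasurable hP1.le
          calc C x ≤ (∫⁻ y, F x y ^ p₁.toReal ∂m) ^ (1/p₁.toReal)
                * (∫⁻ y, H y ^ p₂.toReal ∂m) ^ (1/p₂.toReal) := holder
            _ ≤ (∫⁻ ξ, (‖f' ξ‖₊ : ℝ≥0∞) ^ p₁.toReal ∂m) ^ (1/p₁.toReal)
                * (∫⁻ y, H y ^ p₂.toReal ∂m) ^ (1/p₂.toReal) :=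
              mul_le_mul' (ENNReal.rpow_le_rpow hJ (by positivity)) le_rfl
            _ = eLpNorm f' p₁ m * eLpNorm h' p₂ m := by
              rw [eLpNorm_eq_lintegral_rpow_enorm_toReal hp10 hp1t,
                eLpNorm_eq_lintegral_rpow_enorm_toReal hp20 hp2t]; rfl
    have hlt : eLpNorm f' p₁ m * eLpNorm h' p₂ m < ⊤ := by
      refine ENNReal.mul_lt_top ?_ ?_
      · rw [← eLpNorm_congr_ae hff']; exact hf.2
      · rw [← eLpNorm_congr_ae hhh']; exact hh.2
    refine ⟨ae_of_all _ fun x => lt_of_le_of_lt (key x) hlt, ?_⟩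
    rw [eLpNorm_exponent_top]
    exact essSup_le_of_ae_le _ (ae_of_all _ fun x => le_trans (hCbound x) (key x))
  · -- case r < ∞
    have hp1t : p₁ ≠ ∞ := by
      intro ht; subst ht
      have h2 : 1 / r + 1 ≤ 0 + 1 := by rw [hr]; simpa using hip2
      have h3 : 1 / r = 0 := le_antisymm
        ((ENNReal.add_le_add_iff_right ENNReal.one_ne_top).mp h2) (by simp)
      exact hrtop (by rwa [one_div, ENNReal.inv_eq_zero] at h3)
    have hp2t : p₂ ≠ ∞ := by
      intro ht; subst ht
      have h2 : 1 / r + 1 ≤ 0 + 1 := by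
        rw [hr]; simpa [add_comm] using hip1
      have h3 : 1 / r = 0 := le_antisymm
        ((ENNReal.add_le_add_iff_right ENNReal.one_ne_top).mp h2) (by simp)
      exact hrtop (by rwa [one_div, ENNReal.inv_eq_zero] at h3)
    set P := p₁.toReal with hPdef
    set Q := p₂.toReal with hQdef
    set R := r.toReal with hRdef
    have hP1 : 1 ≤ P := by
      rw [hPdef, ← ENNReal.toReal_one]
      exact (ENNReal.toReal_le_toReal ENNReal.one_ne_top hp1t).mpr hp₁
    have hQ1 : 1 ≤ Q := by
      rw [hQdef, ← ENNReal.toReal_one]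
      exact (ENNReal.toReal_le_toReal ENNReal.one_ne_top hp2t).mpr hp₂
    have hR1 : 1 ≤ R := by
      rw [hRdef, ← ENNReal.toReal_one]
      exact (ENNReal.toReal_le_toReal ENNReal.one_ne_top hrtop).mpr hr1
    have hP0 : (0:ℝ) < P := lt_of_lt_of_le one_pos hP1
    have hQ0 : (0:ℝ) < Q := lt_of_lt_of_le one_pos hQ1
    have hR0 : (0:ℝ) < R := lt_of_lt_of_le one_pos hR1
    have hreal : 1/R + 1 = 1/P + 1/Q := by
      have h1 : (1/r + 1).toReal = (1/p₁ + 1/p₂).toReal := by rw [hr]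
      rw [ENNReal.toReal_add (hir.trans_lt ENNReal.one_lt_top).ne ENNReal.one_ne_top,
        ENNReal.toReal_add (hip1.trans_lt ENNReal.one_lt_top).ne
          (hip2.trans_lt ENNReal.one_lt_top).ne,
        ENNReal.toReal_div, ENNReal.toReal_div, ENNReal.toReal_div, ENNReal.toReal_one] at h1
      exact h1
    have hPle : 1/P ≤ 1 := by rw [div_le_one hP0]; exact hP1
    have hQle : 1/Q ≤ 1 := by rw [div_le_one hQ0]; exact hQ1
    set a : ℝ := 1/R with ha_def
    set b : ℝ := 1/P - 1/R with hb_def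
    set c : ℝ := 1/Q - 1/R with hc_def
    have ha : (0:ℝ) ≤ a := by rw [ha_def]; positivity
    have hb : (0:ℝ) ≤ b := by rw [hb_def]; linarith
    have hc : (0:ℝ) ≤ c := by rw [hc_def]; linarith
    have habc : a + b + c = 1 := by rw [ha_def, hb_def, hc_def]; linarith
    have hab : P * a + P * b = 1 := by
      rw [ha_def, hb_def]; field_simp; ring
    have hac : Q * a + Q * c = 1 := by
      rw [ha_def, hc_def]; field_simp; ring
    set A := ∫⁻ ξ, (‖f' ξ‖₊ : ℝ≥0∞) ^ P ∂m with hA_def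
    set B := ∫⁻ y, H y ^ Q ∂m with hB_def
    have hAeq : eLpNorm f' p₁ m = A ^ (1/P) := eLpNorm_eq_lintegral_rpow_enorm_toReal hp10 hp1t
    have hBeq : eLpNorm h' p₂ m = B ^ (1/Q) := eLpNorm_eq_lintegral_rpow_enorm_toReal hp20 hp2t
    have hAne : A ≠ ⊤ := by
      intro htop
      refine hf.2.ne ?_
      rw [eLpNorm_congr_ae hff', hAeq, htop, ENNReal.top_rpow_of_pos (by positivity)]
    have hBne : B ≠ ⊤ := by
      intro htop
      refine hh.2.ne ?_
      rw [eLpNorm_congr_ae hhh', hBeq, htop, ENNReal.top_rpow_of_pos (by positivity)]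
    have hJ : ∀ x, ∫⁻ y, F x y ^ P ∂m ≤ A := by
      intro x
      refine le_trans (lintegral_mono fun y => ?_)
        (le_of_eq (hbind x _ (hf'meas.enorm.pow_const P)))
      haveI := hkprob x y
      exact jensen_aux (k x y) hf'meas.enorm.aemeasurable hP1
    have hJ' : ∀ y, ∫⁻ x, F x y ^ P ∂m ≤ A := by
      intro y
      refine le_trans (lintegral_mono fun x => ?_)
        (le_of_eq (hbind' y _ (hf'meas.enorm.pow_const P)))
      haveI := hkprob x y
      exact jensen_aux (k x y) hf'meas.enorm.aemeasurable hP1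
    set D : E → ℝ≥0∞ := fun x => ∫⁻ y, F x y ^ P * H y ^ Q ∂m with hD_def
    have hFHmeas : Measurable fun p : E × E => F p.1 p.2 ^ P * H p.2 ^ Q :=
      (hFmeas.pow_const P).mul ((hHmeas.comp measurable_snd).pow_const Q)
    have hDmeas : Measurable D := Measurable.lintegral_prod_right' hFHmeas
    have hDbound : ∫⁻ x, D x ∂m ≤ A * B := by
      rw [hD_def]
      rw [lintegral_lintegral_swap hFHmeas.aemeasurable]
      calc ∫⁻ y, ∫⁻ x, F x y ^ P * H y ^ Q ∂m ∂m
          = ∫⁻ y, (∫⁻ x, F x y ^ P ∂m) * H y ^ Q ∂m := by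
            refine lintegral_congr fun y => lintegral_mul_const _
              ((hFmeas.comp measurable_prodMk_right).pow_const P)
        _ ≤ ∫⁻ y, A * H y ^ Q ∂m := lintegral_mono fun y => mul_le_mul' (hJ' y) le_rfl
        _ = A * B := by rw [lintegral_const_mul A (hHmeas.pow_const Q)]
    have hpt : ∀ u v : ℝ≥0∞, u * v = (u ^ P * v ^ Q) ^ a * (u ^ P) ^ b * (v ^ Q) ^ c := by
      intro u v
      rw [ENNReal.mul_rpow_of_nonneg _ _ ha, ← ENNReal.rpow_mul, ← ENNReal.rpow_mul,
        ← ENNReal.rpow_mul, ← ENNReal.rpow_mul]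
      calc u * v = u ^ (P * a + P * b) * v ^ (Q * a + Q * c) := by
            rw [hab, hac, ENNReal.rpow_one, ENNReal.rpow_one]
        _ = u ^ (P * a) * u ^ (P * b) * (v ^ (Q * a) * v ^ (Q * c)) := by
            rw [ENNReal.rpow_add_of_nonneg _ _ (mul_nonneg hP0.le ha) (mul_nonneg hP0.le hb),
              ENNReal.rpow_add_of_nonneg _ _ (mul_nonneg hQ0.le ha) (mul_nonneg hQ0.le hc)]
        _ = u ^ (P * a) * v ^ (Q * a) * (u ^ (P * b)) * v ^ (Q * c) := by ring
    have hold : ∀ x, C x ≤ D x ^ a * A ^ b * B ^ c := by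
      intro x
      have key := ENNReal.lintegral_prod_norm_pow_le (μ := m) Finset.univ
        (f := ![fun y => F x y ^ P * H y ^ Q, fun y => F x y ^ P, fun y => H y ^ Q])
        (p := ![a, b, c])
        (fun i _ => by
          fin_cases i
          · exact (((hFxmeas x).pow_const P).mul (hHmeas.pow_const Q)).aemeasurable
          · exact ((hFxmeas x).pow_const P).aemeasurable
          · exact (hHmeas.pow_const Q).aemeasurable)
        (by
          simp only [Fin.sum_univ_three, Matrix.cons_val_zero, Matrix.cons_val_one,
            Matrix.head_cons, Matrix.cons_val_two, Matrix.tail_cons]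
          exact habc)
        (fun i _ => by fin_cases i <;> assumption)
      simp only [Fin.prod_univ_three, Matrix.cons_val_zero, Matrix.cons_val_one,
        Matrix.head_cons, Matrix.cons_val_two, Matrix.tail_cons] at key
      calc C x = ∫⁻ y, (F x y ^ P * H y ^ Q) ^ a * (F x y ^ P) ^ b * (H y ^ Q) ^ c ∂m := by
            rw [hCdef]; exact lintegral_congr fun y => hpt (F x y) (H y)
        _ ≤ (∫⁻ y, F x y ^ P * H y ^ Q ∂m) ^ a * (∫⁻ y, F x y ^ P ∂m) ^ b
            * (∫⁻ y, H y ^ Q ∂m) ^ c := key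
        _ ≤ D x ^ a * A ^ b * B ^ c := by
            exact mul_le_mul' (mul_le_mul' le_rfl (ENNReal.rpow_le_rpow (hJ x) hb)) le_rfl
    have haR : a * R = 1 := by rw [ha_def]; field_simp
    have hCR : ∫⁻ x, C x ^ R ∂m ≤ A ^ (b * R + 1) * B ^ (c * R + 1) := by
      calc ∫⁻ x, C x ^ R ∂m ≤ ∫⁻ x, (D x ^ a * A ^ b * B ^ c) ^ R ∂m :=
            lintegral_mono fun x => ENNReal.rpow_le_rpow (hold x) hR0.le
        _ = ∫⁻ x, D x * (A ^ (b*R) * B ^ (c*R)) ∂m := by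
            refine lintegral_congr fun x => ?_
            rw [ENNReal.mul_rpow_of_nonneg _ _ hR0.le, ENNReal.mul_rpow_of_nonneg _ _ hR0.le,
              ← ENNReal.rpow_mul, ← ENNReal.rpow_mul, ← ENNReal.rpow_mul, haR, ENNReal.rpow_one]
            ring
        _ = (∫⁻ x, D x ∂m) * (A ^ (b*R) * B ^ (c*R)) :=
            lintegral_mul_const _ hDmeas
        _ ≤ (A * B) * (A ^ (b*R) * B ^ (c*R)) := mul_le_mul' hDbound le_rfl
        _ = A ^ (b*R+1) * B ^ (c*R+1) := by
            rw [ENNReal.rpow_add_of_nonneg _ _ (mul_nonneg hb hR0.le) zero_le_one,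
              ENNReal.rpow_add_of_nonneg _ _ (mul_nonneg hc hR0.le) zero_le_one,
              ENNReal.rpow_one, ENNReal.rpow_one]
            ring
    have key1 : ∀ᵐ x ∂m, C x < ⊤ := by
      have hfin : ∫⁻ x, C x ^ R ∂m ≠ ⊤ := by
        refine (lt_of_le_of_lt hCR (ENNReal.mul_lt_top ?_ ?_)).ne
        · exact ENNReal.rpow_lt_top_of_nonneg (by positivity) hAne
        · exact ENNReal.rpow_lt_top_of_nonneg (by positivity) hBne
      filter_upwards [ae_lt_top (hCmeas.pow_const R) hfin] with x hx
      by_contra hcx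
      rw [not_lt, top_le_iff] at hcx
      rw [hcx, ENNReal.top_rpow_of_pos hR0] at hx
      exact lt_irrefl _ hx
    refine ⟨key1, ?_⟩
    rw [eLpNorm_eq_lintegral_rpow_enorm_toReal hr0 hrtop, hAeq, hBeq]
    have step1 : ∫⁻ x, (‖∫ y, (∫ ξ, f' ξ ∂(k x y)) * h' y ∂m‖₊ : ℝ≥0∞) ^ R ∂m
        ≤ A ^ (b*R+1) * B ^ (c*R+1) :=
      le_trans (lintegral_mono fun x => ENNReal.rpow_le_rpow (hCbound x) hR0.le) hCR
    calc (∫⁻ x, (‖∫ y, (∫ ξ, f' ξ ∂(k x y)) * h' y ∂m‖₊ : ℝ≥0∞) ^ R ∂m) ^ (1/R)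
        ≤ (A ^ (b*R+1) * B ^ (c*R+1)) ^ (1/R) := ENNReal.rpow_le_rpow step1 (by positivity)
      _ = A ^ (1/P) * B ^ (1/Q) := by
          rw [ENNReal.mul_rpow_of_nonneg _ _ (by positivity : (0:ℝ) ≤ 1/R),
            ← ENNReal.rpow_mul, ← ENNReal.rpow_mul]
          congr 1
          · congr 1
            rw [hb_def]; field_simp; ring
          · congr 1
            rw [hc_def]; field_simp; ring
end

section
/- If μ is a finite signed Borel measure on E such that ∫_E φ_j dμ = 0 for every j ∈ ℕ, then μ = 0. -/
open MeasureTheory Filter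

theorem stmt_15 {E : Type*} [MetricSpace E] [CompactSpace E] [MeasurableSpace E] [BorelSpace E]
    (m : Measure E) [IsFiniteMeasure m]
    (lam : ℕ → ℝ) (hlam : ∀ j, 0 ≤ lam j)
    (hsum : ∀ t : ℝ, 0 < t → Summable fun j => Real.exp (-lam j * t))
    (φ : ℕ → E → ℝ) (hφc : ∀ j, Continuous (φ j))
    (hφpos : ∀ j, 0 < Real.sqrt (∫ z, (φ j z) ^ 2 ∂m))
    (hφbdd : ∃ M : ℝ, ∀ j, Real.sqrt (∫ z, (φ j z) ^ 2 ∂m) ≤ M)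
    (hgrowth : ∀ ε : ℝ, 0 < ε → ∃ C : ℝ, ∀ (j : ℕ) (x : E),
      |φ j x| ≤ C * Real.exp (lam j * ε) * Real.sqrt (∫ z, (φ j z) ^ 2 ∂m))
    (happrox : ∀ h : E → ℝ, Continuous h →
      Tendsto (fun t : ℝ => ⨆ x : E,
          |(∑' j, Real.exp (-lam j * t) * (∫ z, h z * φ j z ∂m) * φ j x /
            Real.sqrt (∫ z, (φ j z) ^ 2 ∂m) ^ 2) - h x|)
        (nhdsWithin 0 (Set.Ioi 0)) (nhds 0))
    (μ : SignedMeasure E)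
    (hμ : ∀ j : ℕ, ∫ x, φ j x ∂μ.toJordanDecomposition.posPart
        = ∫ x, φ j x ∂μ.toJordanDecomposition.negPart) :
    μ = 0 := by
  classical
  set p := μ.toJordanDecomposition.posPart with hpdef
  set n := μ.toJordanDecomposition.negPart with hndef
  haveI hpf : IsFiniteMeasure p := by rw [hpdef]; infer_instance
  haveI hnf : IsFiniteMeasure n := by rw [hndef]; infer_instance
  set N : ℕ → ℝ := fun j => Real.sqrt (∫ z, (φ j z) ^ 2 ∂m) with hNdef
  have key : ∀ h : E → ℝ, Continuous h → ∫ x, h x ∂p = ∫ x, h x ∂n := by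
    intro h hc
    -- a uniform bound on h
    obtain ⟨Hb, hHb0, hHb⟩ : ∃ Hb : ℝ, 0 ≤ Hb ∧ ∀ x, |h x| ≤ Hb := by
      rcases (isCompact_range hc.abs).bddAbove with ⟨B, hB⟩
      exact ⟨max B 0, le_max_right _ _,
        fun x => le_trans (hB ⟨x, rfl⟩) (le_max_left _ _)⟩
    set A := |(∫ x, h x ∂p) - ∫ x, h x ∂n| with hAdef
    have hA : A ≤ 0 := by
      have hS := happrox h hc
      have h1 : Tendsto (fun t : ℝ => (⨆ x : E,
          |(∑' j, Real.exp (-lam j * t) * (∫ z, h z * φ j z ∂m) * φ j x / N j ^ 2) - h x|) *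
            ((p Set.univ).toReal + (n Set.univ).toReal))
          (nhdsWithin 0 (Set.Ioi 0)) (nhds 0) := by
        simpa using hS.mul_const ((p Set.univ).toReal + (n Set.univ).toReal)
      refine ge_of_tendsto h1 ?_
      filter_upwards [self_mem_nhdsWithin] with t ht
      have ht : (0:ℝ) < t := ht
      obtain ⟨C0, hC0⟩ := hgrowth (t/4) (by positivity)
      set C := |C0| with hCdef
      have hC : 0 ≤ C := abs_nonneg _
      have hφb : ∀ j x, |φ j x| ≤ C * Real.exp (lam j * (t/4)) * N j := by
        intro j x
        refine (hC0 j x).trans ?_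
        exact mul_le_mul_of_nonneg_right
          (mul_le_mul_of_nonneg_right (le_abs_self C0) (Real.exp_pos _).le) (hφpos j).le
      have ha : ∀ j, |∫ z, h z * φ j z ∂m|
          ≤ (Hb * (C * Real.exp (lam j * (t/4)) * N j)) * (m Set.univ).toReal := by
        intro j
        have := norm_integral_le_of_norm_le_const (μ := m)
          (f := fun z => h z * φ j z) (C := Hb * (C * Real.exp (lam j * (t/4)) * N j))
          (Eventually.of_forall fun z => by
            rw [Real.norm_eq_abs, abs_mul]
            exact mul_le_mul (hHb z) (hφb j z) (abs_nonneg _) hHb0)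
        simpa [Real.norm_eq_abs, measureReal_def] using this
      set K := Hb * C * C * (m Set.univ).toReal with hKdef
      set u : ℕ → ℝ := fun j => K * Real.exp (-lam j * (t/2)) with hudef
      have husum : Summable u := (hsum (t/2) (by positivity)).mul_left K
      set F : ℕ → E → ℝ := fun j x =>
        Real.exp (-lam j * t) * (∫ z, h z * φ j z ∂m) * φ j x / N j ^ 2 with hFdef
      have hFu : ∀ j x, |F j x| ≤ u j := by
        intro j x
        have hN := hφpos j
        have hNsq : (0:ℝ) < N j ^ 2 := by positivity
        rw [hFdef]
        rw [abs_div, abs_of_pos hNsq, div_le_iff₀ hNsq, abs_mul, abs_mul,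
          abs_of_pos (Real.exp_pos _)]
        have hexp : Real.exp (-lam j * t) *
            (Real.exp (lam j * (t/4)) * Real.exp (lam j * (t/4)))
            = Real.exp (-lam j * (t/2)) := by
          rw [← Real.exp_add, ← Real.exp_add]; congr 1; ring
        calc Real.exp (-lam j * t) * |∫ z, h z * φ j z ∂m| * |φ j x|
            ≤ Real.exp (-lam j * t) *
              ((Hb * (C * Real.exp (lam j * (t/4)) * N j)) * (m Set.univ).toReal) *
              (C * Real.exp (lam j * (t/4)) * N j) := by
              refine mul_le_mul (mul_le_mul_of_nonneg_left (ha j) (Real.exp_pos _).le)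
                (hφb j x) (abs_nonneg _) ?_
              have : (0:ℝ) ≤ Hb * (C * Real.exp (lam j * (t/4)) * N j) :=
                mul_nonneg hHb0 (mul_nonneg (mul_nonneg hC (Real.exp_pos _).le) hN.le)
              exact mul_nonneg (Real.exp_pos _).le (mul_nonneg this ENNReal.toReal_nonneg)
          _ = u j * N j ^ 2 := by
              rw [hudef, hKdef]
              simp only []
              rw [← hexp]; ring
      have hFc : ∀ j, Continuous (F j) := by
        intro j
        rw [hFdef]
        exact (continuous_const.mul (hφc j)).div_const _
      set g : E → ℝ := fun x => ∑' j, F j x with hgdef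
      have hgc : Continuous g := by
        rw [hgdef]
        exact continuous_tsum hFc husum (fun j x => by rw [Real.norm_eq_abs]; exact hFu j x)
      -- facts for an arbitrary finite measure
      have main : ∀ (ν : Measure E), IsFiniteMeasure ν →
          Integrable g ν ∧ ∫ x, g x ∂ν = ∑' j,
            (Real.exp (-lam j * t) * (∫ z, h z * φ j z ∂m) / N j ^ 2) * ∫ x, φ j x ∂ν := by
        intro ν hν
        have hFint : ∀ j, Integrable (F j) ν :=
          fun j => (hFc j).integrable_of_hasCompactSupport (HasCompactSupport.of_compactSpace _)
        have hFnorm : Summable fun j => ∫ x, ‖F j x‖ ∂ν := by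
          refine Summable.of_nonneg_of_le (fun j => integral_nonneg fun x => norm_nonneg _)
            (fun j => ?_) (husum.mul_right (ν Set.univ).toReal)
          calc ∫ x, ‖F j x‖ ∂ν ≤ ∫ _x, u j ∂ν :=
                integral_mono (hFint j).norm (integrable_const _)
                  (fun x => by rw [Real.norm_eq_abs]; exact hFu j x)
            _ = u j * (ν Set.univ).toReal := by simp [mul_comm, measureReal_def]
        refine ⟨hgc.integrable_of_hasCompactSupport (HasCompactSupport.of_compactSpace _), ?_⟩
        rw [hgdef]
        rw [← integral_tsum_of_summable_integral_norm hFint hFnorm]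
        refine tsum_congr fun j => ?_
        have hrw : ∀ x, F j x =
            (Real.exp (-lam j * t) * (∫ z, h z * φ j z ∂m) / N j ^ 2) * φ j x := by
          intro x; rw [hFdef]; ring
        simp_rw [hrw]
        exact integral_const_mul _ _
      obtain ⟨hgip, hgp⟩ := main p hpf
      obtain ⟨hgin, hgn⟩ := main n hnf
      have hgpn : ∫ x, g x ∂p = ∫ x, g x ∂n := by
        rw [hgp, hgn]
        exact tsum_congr fun j => by rw [hμ j]
      have hhint : ∀ (ν : Measure E), IsFiniteMeasure ν → Integrable h ν :=
        fun ν hν => hc.integrable_of_hasCompactSupport (HasCompactSupport.of_compactSpace _)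
      set S := ⨆ x : E, |g x - h x| with hSdef
      have hbdd : BddAbove (Set.range fun x => |g x - h x|) :=
        (isCompact_range (hgc.sub hc).abs).bddAbove
      have hle : ∀ (ν : Measure E) (hν : IsFiniteMeasure ν), Integrable g ν →
          |(∫ x, h x ∂ν) - ∫ x, g x ∂ν| ≤ S * (ν Set.univ).toReal := by
        intro ν hν hgi
        rw [← integral_sub (hhint ν hν) hgi, ← Real.norm_eq_abs]
        refine norm_integral_le_of_norm_le_const (Eventually.of_forall fun x => ?_)
        rw [Real.norm_eq_abs, abs_sub_comm]
        exact le_ciSup hbdd x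
      have hfinal : A ≤ S * ((p Set.univ).toReal + (n Set.univ).toReal) := by
        have hsplit : (∫ x, h x ∂p) - ∫ x, h x ∂n =
            ((∫ x, h x ∂p) - ∫ x, g x ∂p) + ((∫ x, g x ∂n) - ∫ x, h x ∂n) := by
          rw [hgpn]; ring
        calc A = |((∫ x, h x ∂p) - ∫ x, g x ∂p) + ((∫ x, g x ∂n) - ∫ x, h x ∂n)| := by
              rw [hAdef, hsplit]
          _ ≤ |(∫ x, h x ∂p) - ∫ x, g x ∂p| + |(∫ x, g x ∂n) - ∫ x, h x ∂n| := abs_add_le _ _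
          _ ≤ S * (p Set.univ).toReal + S * (n Set.univ).toReal := by
              refine add_le_add (hle p hpf hgip) ?_
              rw [abs_sub_comm]
              exact hle n hnf hgin
          _ = S * ((p Set.univ).toReal + (n Set.univ).toReal) := by ring
      have : S = ⨆ x : E,
          |(∑' j, Real.exp (-lam j * t) * (∫ z, h z * φ j z ∂m) * φ j x / N j ^ 2) - h x| := by
        rw [hSdef, hgdef, hFdef]
      rw [this] at hfinal
      exact hfinal
    have : (∫ x, h x ∂p) - ∫ x, h x ∂n = 0 :=
      abs_eq_zero.mp (le_antisymm hA (abs_nonneg _))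
    linarith
  have hpn : p = n := by
    apply ext_of_forall_lintegral_eq_of_IsFiniteMeasure
    intro f
    have hfc : Continuous fun x => (f x : ℝ) := NNReal.continuous_coe.comp f.continuous
    have h1 : Integrable (fun x => (f x : ℝ)) p :=
      hfc.integrable_of_hasCompactSupport (HasCompactSupport.of_compactSpace _)
    have h2 : Integrable (fun x => (f x : ℝ)) n :=
      hfc.integrable_of_hasCompactSupport (HasCompactSupport.of_compactSpace _)
    rw [lintegral_coe_eq_integral _ h1, lintegral_coe_eq_integral _ h2, key _ hfc]
  calc μ = μ.toJordanDecomposition.toSignedMeasure :=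
        (μ.toSignedMeasure_toJordanDecomposition).symm
    _ = p.toSignedMeasure - n.toSignedMeasure := rfl
    _ = 0 := by rw [sub_eq_zero]; congr 1
end
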